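/- arXiv:1609.06810 — 14 statements merged into one kernel-verified Lean document; each statement's English description precedes it below -/
import Mathlib

section
/- For any sequence (x_k) of complex numbers and any n ≥ 0, the Hankel determinant det[x_{i+j}]_{0≤i,j≤n} equals det[x'_{i+j}]_{0≤i,j≤n}, where x'_m = ∑_{k=0}^m C(m,k) x_k is the binomial transform. -/
open Finset Matrix

lemma key_sum (x : ℕ → ℂ) (i j n : ℕ) (hi : i ≤ n) (hj : j ≤ n) :
    ∑ a ∈ range (n+1), ∑ b ∈ range (n+1),
      (i.choose a : ℂ) * x (a+b) * (j.choose b : ℂ)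
    = ∑ k ∈ range (i+j+1), ((i+j).choose k : ℂ) * x k := by
  have h1 : ∑ a ∈ range (n+1), ∑ b ∈ range (n+1),
      (i.choose a : ℂ) * x (a+b) * (j.choose b : ℂ)
      = ∑ p ∈ range (i+1) ×ˢ range (j+1),
        (i.choose p.1 : ℂ) * x (p.1+p.2) * (j.choose p.2 : ℂ) := by
    rw [Finset.sum_product]
    have houter : ∀ a, ∑ b ∈ range (n+1), (i.choose a : ℂ) * x (a+b) * (j.choose b : ℂ)
        = ∑ b ∈ range (j+1), (i.choose a : ℂ) * x (a+b) * (j.choose b : ℂ) := by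
      intro a
      refine (Finset.sum_subset (Finset.range_subset_range.2 (Nat.succ_le_succ hj)) ?_).symm
      intro b _ hb
      rw [Nat.choose_eq_zero_of_lt (show j < b by simpa using hb)]
      simp
    simp only [houter]
    refine (Finset.sum_subset (Finset.range_subset_range.2 (Nat.succ_le_succ hi)) ?_).symm
    intro a _ ha
    rw [Nat.choose_eq_zero_of_lt (show i < a by simpa using ha)]
    simp
  have h2 : ∑ k ∈ range (i+j+1), ((i+j).choose k : ℂ) * x k
      = ∑ p ∈ (range (i+j+1)).biUnion Finset.HasAntidiagonal.antidiagonal,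
        (i.choose p.1 : ℂ) * x (p.1+p.2) * (j.choose p.2 : ℂ) := by
    rw [Finset.sum_biUnion]
    · refine Finset.sum_congr rfl fun k _ => ?_
      rw [Nat.add_choose_eq]
      push_cast
      rw [Finset.sum_mul]
      refine Finset.sum_congr rfl fun p hp => ?_
      rw [Finset.HasAntidiagonal.mem_antidiagonal.1 hp]
      ring
    · intro s _ t _ hst
      simp only [Finset.disjoint_left]
      intro p hp hq
      exact hst (by rw [← Finset.HasAntidiagonal.mem_antidiagonal.1 hp, Finset.HasAntidiagonal.mem_antidiagonal.1 hq])
  rw [h1, h2]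
  refine Finset.sum_subset ?_ ?_
  · intro p hp
    simp only [Finset.mem_product, Finset.mem_range] at hp
    simp only [Finset.mem_biUnion, Finset.mem_range, Finset.HasAntidiagonal.mem_antidiagonal]
    exact ⟨p.1 + p.2, by omega, rfl⟩
  · intro p _ hp
    simp only [Finset.mem_product, Finset.mem_range, not_and_or, not_lt] at hp
    rcases hp with h | h
    · rw [Nat.choose_eq_zero_of_lt (show i < p.1 by omega)]; simp
    · rw [Nat.choose_eq_zero_of_lt (show j < p.2 by omega)]; simp

theorem hankel_det_binomial_transform (x : ℕ → ℂ) (n : ℕ) :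
    Matrix.det (Matrix.of fun i j : Fin (n + 1) => x (i.1 + j.1)) =
      Matrix.det (Matrix.of fun i j : Fin (n + 1) =>
        ∑ k ∈ Finset.range (i.1 + j.1 + 1), ((i.1 + j.1).choose k : ℂ) * x k) := by
  set H : Matrix (Fin (n+1)) (Fin (n+1)) ℂ :=
    Matrix.of fun i j : Fin (n + 1) => x (i.1 + j.1) with hH
  set P : Matrix (Fin (n+1)) (Fin (n+1)) ℂ :=
    Matrix.of fun i a : Fin (n + 1) => ((i.1).choose a.1 : ℂ) with hP
  have hPdet : P.det = 1 := by
    rw [Matrix.det_of_lowerTriangular P]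
    · simp [hP]
    · intro i a h
      simp only [hP, Matrix.of_apply]
      rw [Nat.choose_eq_zero_of_lt (by exact_mod_cast h)]
      simp
  have hmul : P * H * P.transpose = Matrix.of fun i j : Fin (n + 1) =>
      ∑ k ∈ Finset.range (i.1 + j.1 + 1), ((i.1 + j.1).choose k : ℂ) * x k := by
    ext i j
    calc (P * H * P.transpose) i j
        = ∑ b : Fin (n+1), ∑ a : Fin (n+1),
            ((i.1).choose a.1 : ℂ) * x (a.1 + b.1) * ((j.1).choose b.1 : ℂ) := by
          simp only [Matrix.mul_apply, Matrix.transpose_apply, hP, hH, Matrix.of_apply,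
            Finset.sum_mul]
      _ = ∑ b ∈ range (n+1), ∑ a ∈ range (n+1),
            ((i.1).choose a : ℂ) * x (a + b) * ((j.1).choose b : ℂ) := by
          rw [Fin.sum_univ_eq_sum_range (fun b => ∑ a : Fin (n+1),
            ((i.1).choose a.1 : ℂ) * x (a.1 + b) * ((j.1).choose b : ℂ))]
          exact Finset.sum_congr rfl fun b _ => Fin.sum_univ_eq_sum_range
            (fun a => ((i.1).choose a : ℂ) * x (a + b) * ((j.1).choose b : ℂ)) (n+1)
      _ = ∑ k ∈ Finset.range (i.1 + j.1 + 1), ((i.1 + j.1).choose k : ℂ) * x k := by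
          rw [Finset.sum_comm]
          exact key_sum x i.1 j.1 n (Nat.lt_succ_iff.1 i.2) (Nat.lt_succ_iff.1 j.2)
      _ = _ := rfl
  rw [← hmul, Matrix.det_mul, Matrix.det_mul, hPdet, Matrix.det_transpose, hPdet]
  ring
end

section
/- Barrucand's identity: for every nonnegative integer n, ∑_{k=0}^n C(n,k) f_k = ∑_{k=0}^n C(n,k)^2 C(2k,k), where f_k = ∑_{j=0}^k C(k,j)^3 is the k-th Franel number. -/
open Polynomial Finset

namespace Barrucand

abbrev A : Type := Polynomial ℕ
abbrev B : Type := Polynomial A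

lemma aux1 (t s m : ℕ) (h : s ≤ m) : (((1+X)^t * X^s : A)).coeff m = t.choose (m - s) := by
  conv_lhs => rw [show m = (m - s) + s by omega]
  rw [coeff_mul_X_pow, coeff_one_add_X_pow, Nat.cast_id]

lemma coeff_term (u w : A) (c a b : ℕ) :
    (((C u * (w.map (C : ℕ →+* A)) * ((c : ℕ) : B)).coeff b).coeff a)
      = u.coeff a * w.coeff b * c := by
  rw [← C_eq_natCast, coeff_mul_C, coeff_C_mul, coeff_map, ← C_eq_natCast, coeff_mul_C,
    coeff_mul_C, Nat.cast_id]

lemma coeff_natmul (p : B) (c a b : ℕ) :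
    ((p * ((c : ℕ) : B)).coeff b).coeff a = ((p.coeff b).coeff a) * c := by
  rw [← C_eq_natCast, coeff_mul_C, ← C_eq_natCast, coeff_mul_C, Nat.cast_id]

lemma L1 (n k : ℕ) (hk : k ≤ n) :
    (((((1 + C X) * (1 + X) * (C X + X) : B))^k * ((C X) * X)^(n-k)).coeff n).coeff n
      = ∑ j ∈ Finset.range (k+1), (k.choose j)^3 := by
  have expand : ((((1 + C X) * (1 + X) * (C X + X) : B))^k * ((C X) * X)^(n-k))
      = ∑ j ∈ Finset.range (k+1),
          C ((1+X)^k * X^(n-k+j)) * ((((1:A)+X)^k * X^(n-j)).map (C : ℕ →+* A))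
            * ((k.choose j : ℕ) : B) := by
    have hsplit : (((1 + C X) * (1 + X) * (C X + X) : B))^k
        = (1 + C X)^k * (1 + X)^k * (C X + X)^k := by rw [mul_pow (M := B), mul_pow (M := B)]
    rw [hsplit, add_pow (R := B) (C X) X k, mul_sum, sum_mul]
    refine Finset.sum_congr rfl ?_
    intro j hj
    have hjk : j ≤ k := by simpa [Nat.lt_succ_iff] using hj
    have e1 : n - j = (k - j) + (n - k) := by omega
    simp only [Polynomial.map_mul, Polynomial.map_pow, Polynomial.map_add,
      Polynomial.map_one, Polynomial.map_X, map_mul, map_pow, map_add, map_one]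
    rw [e1]
    ring
  rw [expand, finset_sum_coeff, finset_sum_coeff]
  refine Finset.sum_congr rfl ?_
  intro j hj
  have hjk : j ≤ k := by simpa [Nat.lt_succ_iff] using hj
  rw [coeff_term, aux1 k (n-k+j) n (by omega), aux1 k (n-j) n (by omega),
    show n - (n-k+j) = k - j by omega, show n - (n-j) = j by omega,
    Nat.choose_symm hjk]
  ring

lemma L2 (n : ℕ) :
    (((((1 + C X + X) * (C X + X + C X * X) : B))^n).coeff n).coeff n
      = ∑ k ∈ Finset.range (n+1), (n.choose k)^2 * (2*k).choose k := by
  have e1 : (1 + C X + X : B) = C ((1:A)+X) + X := by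
    simp only [map_add, map_one]
  have e2 : (C X + X + C X * X : B) = C X + C ((1:A)+X) * X := by
    simp only [map_add, map_one]; ring
  have expand : ((1 + C X + X) * (C X + X + C X * X) : B)^n
      = ∑ k ∈ Finset.range (n+1), ∑ m ∈ Finset.range (n+1),
          C ((1+X)^(k + (n-m)) * X^m) * ((X^((n-k)+(n-m)) : A).map (C : ℕ →+* A))
            * ((n.choose k * n.choose m : ℕ) : B) := by
    rw [mul_pow (M := B), e1, e2, add_pow (R := B) (C ((1:A)+X)) X n,
      add_pow (R := B) (C X) (C ((1:A)+X) * X) n, Finset.sum_mul_sum]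
    refine Finset.sum_congr rfl fun k hk => Finset.sum_congr rfl fun m hm => ?_
    rw [mul_pow (M := B)]
    simp only [Polynomial.map_mul, Polynomial.map_pow, Polynomial.map_add,
      Polynomial.map_one, Polynomial.map_X, map_mul, map_pow, map_add, map_one,
      Nat.cast_mul]
    ring
  rw [expand, finset_sum_coeff, finset_sum_coeff]
  simp only [finset_sum_coeff]
  refine Finset.sum_congr rfl fun k hk => ?_
  have hkn : k ≤ n := by simpa [Nat.lt_succ_iff] using hk
  rw [Finset.sum_eq_single_of_mem (n-k) (by simp [Nat.lt_succ_iff]) ?side]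
  · rw [coeff_term, show k + (n-(n-k)) = 2*k by omega, show (n-k)+(n-(n-k)) = n by omega,
      coeff_X_pow, if_pos rfl, aux1 (2*k) (n-k) n (by omega), show n-(n-k) = k by omega,
      Nat.choose_symm hkn]
    ring
  · intro m hm hne
    have hmn : m ≤ n := by simpa [Nat.lt_succ_iff] using hm
    rw [coeff_term, coeff_X_pow, if_neg (by omega)]
    ring

end Barrucand

theorem barrucand_identity (n : ℕ) :
    ∑ k ∈ Finset.range (n + 1), n.choose k *
        (∑ j ∈ Finset.range (k + 1), (k.choose j) ^ 3) =
      ∑ k ∈ Finset.range (n + 1), (n.choose k) ^ 2 * (2 * k).choose k := by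
  open Polynomial Barrucand in
  have hPQ : ((1 + C X + X) * (C X + X + C X * X) : B)
      = (1 + C X) * (1 + X) * (C X + X) + (C X) * X := by ring
  have hpow : ((1 + C X + X) * (C X + X + C X * X) : B)^n
      = ∑ k ∈ Finset.range (n+1),
          ((1 + C X) * (1 + X) * (C X + X) : B)^k * ((C X) * X)^(n-k)
            * ((n.choose k : ℕ) : B) := by
    rw [hPQ, add_pow (R := B)]
  have hR : (((((1 + C X + X) * (C X + X + C X * X) : B))^n).coeff n).coeff n
      = ∑ k ∈ Finset.range (n+1),
          (∑ j ∈ Finset.range (k+1), (k.choose j)^3) * n.choose k := by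
    rw [hpow, finset_sum_coeff, finset_sum_coeff]
    refine Finset.sum_congr rfl fun k hk => ?_
    have hkn : k ≤ n := by simpa [Nat.lt_succ_iff] using hk
    rw [coeff_natmul, L1 n k hkn]
  calc ∑ k ∈ Finset.range (n + 1), n.choose k *
          (∑ j ∈ Finset.range (k + 1), (k.choose j) ^ 3)
      = ∑ k ∈ Finset.range (n+1),
          (∑ j ∈ Finset.range (k+1), (k.choose j)^3) * n.choose k := by
        exact Finset.sum_congr rfl fun k _ => mul_comm _ _
    _ = (((((1 + C X + X) * (C X + X + C X * X) : B))^n).coeff n).coeff n := hR.symm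
    _ = ∑ k ∈ Finset.range (n + 1), (n.choose k) ^ 2 * (2 * k).choose k := L2 n
end

section
/- For all positive integers m and n, the number D_n^(m) := ∑_{k=0}^n C(n,k)^m C(2k,k) C(2(n-k),n-k) is divisible by 4, and D_n^(m) is divisible by 8 if and only if n is not a power of two. -/
open Finset

/-- sum of binary digits -/
def sd (n : ℕ) : ℕ := (Nat.digits 2 n).sum

lemma sd_rec {n : ℕ} (hn : 0 < n) : sd n = n % 2 + sd (n / 2) := by
  unfold sd
  rw [Nat.digits_def' (by norm_num : (1:ℕ) < 2) hn]
  simp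

lemma sd_two_mul (n : ℕ) : sd (2 * n) = sd n := by
  rcases Nat.eq_zero_or_pos n with rfl | h
  · simp
  · rw [sd_rec (by omega)]
    simp [Nat.mul_mod_right, Nat.mul_div_cancel_left _ (by norm_num : (0:ℕ) < 2)]

lemma sd_pos {n : ℕ} (hn : 0 < n) : 0 < sd n := by
  induction n using Nat.strong_induction_on with
  | _ n ih =>
    rw [sd_rec hn]
    rcases Nat.eq_zero_or_pos (n % 2) with h | h
    · have h2 : 0 < n / 2 := by omega
      have := ih (n / 2) (by omega) h2
      omega
    · omega

lemma sd_pow_two (j : ℕ) : sd (2 ^ j) = 1 := by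
  induction j with
  | zero => simp [sd]
  | succ j ih =>
    have : (2:ℕ) ^ (j + 1) = 2 * 2 ^ j := by ring
    rw [this, sd_two_mul, ih]

lemma sd_eq_one {n : ℕ} (hn : 0 < n) (h : sd n = 1) : ∃ j, n = 2 ^ j := by
  induction n using Nat.strong_induction_on with
  | _ n ih =>
    rw [sd_rec hn] at h
    rcases Nat.eq_zero_or_pos (n % 2) with h2 | h2
    · have h3 : 0 < n / 2 := by omega
      obtain ⟨j, hj⟩ := ih (n / 2) (by omega) h3 (by omega)
      exact ⟨j + 1, by omega⟩
    · have h4 : sd (n / 2) = 0 := by omega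
      have h5 : n / 2 = 0 := by
        by_contra h6
        exact absurd h4 (by have := sd_pos (n := n / 2) (by omega); omega)
      exact ⟨0, by omega⟩

lemma v2_fact (n : ℕ) : padicValNat 2 (Nat.factorial n) = n - sd n := by
  have := sub_one_mul_padicValNat_factorial (p := 2) n
  simpa [sd] using this

/-- key valuation identity for binomial coefficients -/
lemma v2_choose {n k : ℕ} (h : k ≤ n) :
    padicValNat 2 (n.choose k) + sd n = sd k + sd (n - k) := by
  have e : n.choose k * Nat.factorial k * Nat.factorial (n - k) = Nat.factorial n :=
    Nat.choose_mul_factorial_mul_factorial h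
  have hc : n.choose k ≠ 0 := (Nat.choose_pos h).ne'
  have hv : padicValNat 2 (Nat.factorial n) =
      padicValNat 2 (n.choose k) + padicValNat 2 (Nat.factorial k)
        + padicValNat 2 (Nat.factorial (n - k)) := by
    rw [← e, padicValNat.mul (mul_ne_zero hc (Nat.factorial_ne_zero k)) (Nat.factorial_ne_zero _),
      padicValNat.mul hc (Nat.factorial_ne_zero k)]
  rw [v2_fact, v2_fact, v2_fact] at hv
  have s1 : sd k ≤ k := Nat.digit_sum_le 2 k
  have s2 : sd (n - k) ≤ n - k := Nat.digit_sum_le 2 (n - k)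
  have s3 : sd n ≤ n := Nat.digit_sum_le 2 n
  omega

lemma v2_central (k : ℕ) : padicValNat 2 ((2 * k).choose k) = sd k := by
  have h := v2_choose (n := 2 * k) (k := k) (by omega)
  have h2 : 2 * k - k = k := by omega
  rw [h2, sd_two_mul] at h
  omega

lemma term_ne_zero {m n k : ℕ} (h : k ≤ n) :
    (n.choose k) ^ m * (2 * k).choose k * (2 * (n - k)).choose (n - k) ≠ 0 :=
  mul_ne_zero (mul_ne_zero (pow_ne_zero _ (Nat.choose_pos h).ne')
    (Nat.choose_pos (by omega)).ne') (Nat.choose_pos (by omega)).ne'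

lemma v2_term {m n k : ℕ} (h : k ≤ n) :
    padicValNat 2 ((n.choose k) ^ m * (2 * k).choose k * (2 * (n - k)).choose (n - k))
      = m * padicValNat 2 (n.choose k) + sd k + sd (n - k) := by
  have h0 : n.choose k ≠ 0 := (Nat.choose_pos h).ne'
  have h1 : ((2 * k).choose k) ≠ 0 := (Nat.choose_pos (by omega)).ne'
  have h2 : ((2 * (n - k)).choose (n - k)) ≠ 0 := (Nat.choose_pos (by omega)).ne'
  rw [padicValNat.mul (mul_ne_zero (pow_ne_zero _ h0) h1) h2,
    padicValNat.mul (pow_ne_zero _ h0) h1, padicValNat.pow _ _,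
    v2_central, v2_central, add_assoc]

lemma pow_dvd_term {m n k r : ℕ} (h : k ≤ n)
    (hr : r ≤ m * padicValNat 2 (n.choose k) + sd k + sd (n - k)) :
    2 ^ r ∣ (n.choose k) ^ m * (2 * k).choose k * (2 * (n - k)).choose (n - k) := by
  rw [padicValNat_dvd_iff_le (term_ne_zero h), v2_term h]
  exact hr

lemma term_symm (m n k : ℕ) (h : k ≤ n) :
    (n.choose (n - k)) ^ m * (2 * (n - k)).choose (n - k)
        * (2 * (n - (n - k))).choose (n - (n - k))
      = (n.choose k) ^ m * (2 * k).choose k * (2 * (n - k)).choose (n - k) := by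
  rw [Nat.choose_symm h, Nat.sub_sub_self h]
  ring

theorem Dmn_div_four_eight (m n : ℕ) (hm : 1 ≤ m) (hn : 1 ≤ n) :
    4 ∣ (∑ k ∈ Finset.range (n + 1),
        (n.choose k) ^ m * (2 * k).choose k * (2 * (n - k)).choose (n - k)) ∧
      (8 ∣ (∑ k ∈ Finset.range (n + 1),
          (n.choose k) ^ m * (2 * k).choose k * (2 * (n - k)).choose (n - k)) ↔
        ¬ ∃ j : ℕ, n = 2 ^ j) := by
  set t : ℕ → ℕ :=
    fun k => (n.choose k) ^ m * (2 * k).choose k * (2 * (n - k)).choose (n - k) with ht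
  set D := ∑ k ∈ Finset.range (n + 1), t k with hD
  have hsn : 1 ≤ sd n := sd_pos hn
  have hpow : (∃ j, n = 2 ^ j) ↔ sd n = 1 :=
    ⟨fun ⟨j, hj⟩ => hj ▸ sd_pow_two j, fun h => sd_eq_one hn h⟩
  -- F3 : lower bound on digit sums
  have F3 : ∀ k, k ≤ n → sd n ≤ sd k + sd (n - k) := fun k hk => by
    have := v2_choose hk; omega
  -- F1 : each term divisible by 2 ^ (sd k + sd (n-k))
  have F1 : ∀ k, k ≤ n → 2 ^ (sd k + sd (n - k)) ∣ t k := fun k hk =>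
    pow_dvd_term hk (by omega)
  -- F2 : strict terms divisible by 8
  have F2 : ∀ k, k ≤ n → sd n < sd k + sd (n - k) → 8 ∣ t k := fun k hk hlt => by
    have hv := v2_choose hk
    have : (8 : ℕ) = 2 ^ 3 := by norm_num
    rw [this]
    refine pow_dvd_term hk ?_
    have h1 : 1 ≤ padicValNat 2 (n.choose k) := by omega
    calc (3 : ℕ) ≤ m * 1 + (sd n + 1) := by omega
      _ ≤ m * padicValNat 2 (n.choose k) + sd k + sd (n - k) := by
          have := Nat.mul_le_mul_left m h1; omega
  rcases lt_or_ge (sd n) 3 with hlt | hge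
  · rcases (by omega : sd n = 1 ∨ sd n = 2) with h | h
    · -- sd n = 1 : n is a power of two, D ≡ 4 mod 8
      obtain ⟨n', rfl⟩ : ∃ n', n = n' + 1 := ⟨n - 1, by omega⟩
      have hmid : 8 ∣ ∑ k ∈ Finset.range n', t (k + 1) := by
        refine Finset.dvd_sum fun k hk => ?_
        simp only [Finset.mem_range] at hk
        refine F2 (k + 1) (by omega) ?_
        have h1 : 1 ≤ sd (k + 1) := sd_pos (by omega)
        have h2 : 1 ≤ sd (n' + 1 - (k + 1)) := sd_pos (by omega)
        omega
      have hsplit : D = (∑ k ∈ Finset.range n', t (k + 1)) + t 0 + t (n' + 1) := by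
        rw [hD, Finset.sum_range_succ, Finset.sum_range_succ']
      have ht0 : t 0 = (2 * (n' + 1)).choose (n' + 1) := by simp [ht]
      have htn : t (n' + 1) = (2 * (n' + 1)).choose (n' + 1) := by simp [ht]
      -- central binomial has valuation exactly 1
      set C := (2 * (n' + 1)).choose (n' + 1) with hC
      have hvC : padicValNat 2 C = 1 := by rw [hC, v2_central]; exact h
      have hCne : C ≠ 0 := (Nat.choose_pos (by omega)).ne'
      have hdvd1 : 2 ^ 1 ∣ C := (padicValNat_dvd_iff_le hCne).mpr (by omega)
      have hndvd2 : ¬ 2 ^ 2 ∣ C := fun hc => by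
        have := (padicValNat_dvd_iff_le hCne).mp hc; omega
      have hC4 : C % 4 = 2 := by
        simp only [pow_one] at hdvd1
        have h4 : (2:ℕ)^2 = 4 := by norm_num
        rw [h4] at hndvd2
        omega
      obtain ⟨q, hq⟩ := hmid
      have hD8 : D % 8 = 4 := by
        rw [hsplit, ht0, htn, hq]
        omega
      constructor
      · omega
      · rw [iff_iff_implies_and_implies]
        constructor
        · intro h8; omega
        · intro hnp; exact absurd (hpow.mpr h) hnp
    · -- sd n = 2 : not a power of two, 8 ∣ D
      have h4 : ∀ k, k ≤ n → 4 ∣ t k := fun k hk => by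
        have := F1 k hk
        have hle := F3 k hk
        have : (2:ℕ) ^ 2 ∣ 2 ^ (sd k + sd (n - k)) := pow_dvd_pow 2 (by omega)
        have h4eq : (2:ℕ)^2 = 4 := by norm_num
        exact h4eq ▸ this.trans (F1 k hk)
      have h8 : (8 : ℕ) ∣ D := by
        have hcast : ((D : ℕ) : ZMod 8) = 0 := by
          rw [hD, Nat.cast_sum]
          refine Finset.sum_involution (fun k _ => n - k) ?_ ?_ ?_ ?_
          · intro a ha
            simp only [Finset.mem_range] at ha
            have han : a ≤ n := by omega
            show ((t a : ZMod 8) + (t (n - a) : ZMod 8) = 0)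
            have hsym : t (n - a) = t a := term_symm m n a han
            rw [hsym, ← Nat.cast_add, ZMod.natCast_eq_zero_iff]
            obtain ⟨c, hc⟩ := h4 a han
            exact ⟨c, by omega⟩
          · intro a ha hfa
            simp only [Finset.mem_range] at ha
            have han : a ≤ n := by omega
            show n - a ≠ a
            intro heq
            -- n - a = a means n = 2 * a
            have hna : n = 2 * a := by omega
            have hsa : sd a = 2 := by
              have := sd_two_mul a
              rw [← hna] at this
              omega
            have h8a : (8:ℕ) ∣ t a := by
              refine F2 a han ?_
              rw [heq]
              omega
            exact hfa ((ZMod.natCast_eq_zero_iff _ _).mpr h8a)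
          · intro a ha
            simp only [Finset.mem_range] at ha ⊢
            omega
          · intro a ha
            simp only [Finset.mem_range] at ha
            show n - (n - a) = a
            omega
        exact (ZMod.natCast_eq_zero_iff D 8).mp hcast
      refine ⟨dvd_trans (by norm_num) h8, ?_⟩
      rw [iff_iff_implies_and_implies]
      exact ⟨fun _ hp => by rw [hpow] at hp; omega, fun _ => h8⟩
  · -- sd n ≥ 3 : every term divisible by 8
    have h8 : (8 : ℕ) ∣ D := by
      rw [hD]
      refine Finset.dvd_sum fun k hk => ?_
      simp only [Finset.mem_range] at hk
      have hkn : k ≤ n := by omega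
      have := F1 k hkn
      have hle := F3 k hkn
      have hd : (2:ℕ) ^ 3 ∣ 2 ^ (sd k + sd (n - k)) := pow_dvd_pow 2 (by omega)
      have h8eq : (2:ℕ)^3 = 8 := by norm_num
      exact h8eq ▸ hd.trans this
    refine ⟨dvd_trans (by norm_num) h8, ?_⟩
    rw [iff_iff_implies_and_implies]
    exact ⟨fun _ hp => by rw [hpow] at hp; omega, fun _ => h8⟩
end

section
/- For any positive integer n, the central binomial coefficient C(2n−1, n−1) is odd if and only if n is a power of two. -/
private lemma sum_digits_pos : ∀ m : ℕ, 0 < m → 0 < (Nat.digits 2 m).sum := by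
  intro m
  induction m using Nat.strong_induction_on with
  | _ m ih =>
    intro hm
    rw [Nat.digits_def' (by norm_num) hm]
    simp only [List.sum_cons]
    rcases Nat.even_or_odd m with he | ho
    · have hm2 : m % 2 = 0 := Nat.even_iff.mp he
      have h2 : 0 < m / 2 := Nat.div_pos (by omega) (by norm_num)
      have := ih (m / 2) (Nat.div_lt_self hm (by norm_num)) h2
      omega
    · have : m % 2 = 1 := Nat.odd_iff.mp ho
      omega

private lemma sum_digits_eq_one_iff (n : ℕ) (hn : 0 < n) :
    (Nat.digits 2 n).sum = 1 ↔ ∃ j : ℕ, n = 2 ^ j := by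
  constructor
  · induction n using Nat.strong_induction_on with
    | _ n ih =>
      intro h
      rw [Nat.digits_def' (by norm_num) hn] at h
      rcases Nat.even_or_odd n with he | ho
      · have hm : n % 2 = 0 := Nat.even_iff.mp he
        have h2 : 0 < n / 2 := Nat.div_pos (by omega) (by norm_num)
        simp [hm] at h
        obtain ⟨j, hj⟩ := ih (n / 2) (Nat.div_lt_self hn (by norm_num)) h2 h
        exact ⟨j + 1, by omega⟩
      · have hm : n % 2 = 1 := Nat.odd_iff.mp ho
        simp [hm] at h
        have : n / 2 = 0 := by
          by_contra hne
          have := sum_digits_pos (n / 2) (Nat.pos_of_ne_zero hne)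
          omega
        exact ⟨0, by omega⟩
  · rintro ⟨j, rfl⟩
    clear hn
    induction j with
    | zero => simp
    | succ j ihj =>
      rw [pow_succ, Nat.digits_def' (by norm_num : 1 < 2) (by positivity)]
      have h1 : 2 ^ j * 2 % 2 = 0 := by simp
      have h2 : 2 ^ j * 2 / 2 = 2 ^ j := by simp
      rw [h1, h2]
      simpa using ihj

theorem central_binom_odd_iff (n : ℕ) (hn : 1 ≤ n) :
    Odd ((2 * n - 1).choose (n - 1)) ↔ ∃ j : ℕ, n = 2 ^ j := by
  have key : 2 * ((2 * n - 1).choose (n - 1)) = (2 * n).choose n := by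
    have h := Nat.add_one_mul_choose_eq (2 * n - 1) (n - 1)
    have h1 : 2 * n - 1 + 1 = 2 * n := by omega
    have h2 : n - 1 + 1 = n := by omega
    rw [h1, h2] at h
    have : 2 * ((2 * n - 1).choose (n - 1)) * n = (2 * n).choose n * n := by
      rw [mul_right_comm]; exact h
    exact Nat.eq_of_mul_eq_mul_right hn this
  have cpos : 0 < (2 * n).choose n :=
    Nat.choose_pos (by omega)
  -- Kummer: padicValNat 2 ((2n).choose n) = digit sum of n
  haveI : Fact (Nat.Prime 2) := ⟨Nat.prime_two⟩
  have kummer := @sub_one_mul_padicValNat_choose_eq_sub_sum_digits' 2 n n _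
  have hdig : Nat.digits 2 (n + n) = 0 :: Nat.digits 2 n := by
    have : n + n = 2 * n := by ring
    rw [this, Nat.digits_def' (by norm_num : 1 < 2) (by omega),
      Nat.mul_div_cancel_left _ (by norm_num : 0 < 2), Nat.mul_mod_right]
  rw [hdig] at kummer
  simp at kummer
  have hnn : n + n = 2 * n := by ring
  rw [hnn] at kummer
  have hval : padicValNat 2 ((2 * n).choose n) = (Nat.digits 2 n).sum := by omega
  have hoddiff : Odd ((2 * n - 1).choose (n - 1)) ↔
      padicValNat 2 ((2 * n).choose n) = 1 := by
    rw [← key]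
    have hcne : (2 * n - 1).choose (n - 1) ≠ 0 :=
      (Nat.choose_pos (by omega : n - 1 ≤ 2 * n - 1)).ne'
    rw [padicValNat.mul (by norm_num) hcne, padicValNat.self (by norm_num)]
    rw [Nat.odd_iff]
    have hv0 : padicValNat 2 ((2 * n - 1).choose (n - 1)) = 0 ↔
        (2 * n - 1).choose (n - 1) % 2 = 1 := by
      rw [padicValNat.eq_zero_iff]
      simp [hcne, Nat.two_dvd_ne_zero]
    omega
  rw [hoddiff, hval]
  exact sum_digits_eq_one_iff n (by omega)
end

section
/- For every nonnegative integer n, the Domb number D_n := ∑_{k=0}^n C(n,k)^2 C(2k,k) C(2(n−k),n−k) satisfies D_n ≡ 1 (mod 3). -/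
open Finset

private lemma fact3 : Fact (Nat.Prime 3) := ⟨by norm_num⟩

/-- Single-step Lucas mod 3, in `ZMod 3`. -/
private lemma lucas3 (m j r s : ℕ) (hr : r < 3) (hs : s < 3) :
    (((3 * m + r).choose (3 * j + s) : ZMod 3)) =
      (r.choose s : ZMod 3) * (m.choose j : ZMod 3) := by
  have := @Choose.choose_modEq_choose_mod_mul_choose_div_nat (3 * m + r) (3 * j + s) 3 fact3
  have h1 : (3 * m + r) % 3 = r := by omega
  have h2 : (3 * j + s) % 3 = s := by omega
  have h3 : (3 * m + r) / 3 = m := by omega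
  have h4 : (3 * j + s) / 3 = j := by omega
  rw [h1, h2, h3, h4] at this
  have := (ZMod.natCast_eq_natCast_iff _ _ _).mpr this
  push_cast at this ⊢
  rw [this]

/-- Central binomial coefficient mod 3 is multiplicative over the last digit. -/
private lemma central3 (a b : ℕ) (hb : b < 3) :
    (((2 * (3 * a + b)).choose (3 * a + b) : ZMod 3)) =
      ((2 * b).choose b : ZMod 3) * ((2 * a).choose a : ZMod 3) := by
  interval_cases b
  · have h : 2 * (3 * a + 0) = 3 * (2 * a) + 0 := by ring
    rw [h, show (3 * a + 0 : ℕ) = 3 * a + 0 from rfl, lucas3 (2 * a) a 0 0 (by norm_num) (by norm_num)]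
  · have h : 2 * (3 * a + 1) = 3 * (2 * a) + 2 := by ring
    rw [h, lucas3 (2 * a) a 2 1 (by norm_num) (by norm_num)]
  · have h : 2 * (3 * a + 2) = 3 * (2 * a + 1) + 1 := by ring
    rw [h, lucas3 (2 * a + 1) a 1 2 (by norm_num) (by norm_num)]
    norm_num
    left
    show ((6 : ℕ) : ZMod 3) = 0
    decide

/-- The Domb summand, cast into `ZMod 3`. -/
private def T (n k : ℕ) : ZMod 3 :=
  ((n.choose k) ^ 2 * (2 * k).choose k * (2 * (n - k)).choose (n - k) : ℕ)

private lemma term_mul (m r j s : ℕ) (hr : r < 3) (hs : s < 3) :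
    T (3 * m + r) (3 * j + s) = T m j * T r s := by
  unfold T
  push_cast
  rcases lt_or_ge r s with h | h
  · -- `r < s`: both sides vanish since `r.choose s = 0`
    rw [lucas3 m j r s hr hs, Nat.choose_eq_zero_of_lt h]
    push_cast
    ring
  rcases lt_or_ge m j with h2 | h2
  · -- `m < j`: both sides vanish
    rw [Nat.choose_eq_zero_of_lt (show 3 * m + r < 3 * j + s by omega),
      Nat.choose_eq_zero_of_lt h2]
    push_cast
    ring
  · have hsub : (3 * m + r) - (3 * j + s) = 3 * (m - j) + (r - s) := by omega
    rw [hsub, lucas3 m j r s hr hs, central3 j s hs, central3 (m - j) (r - s) (by omega)]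
    ring

/-- Domb sum in `ZMod 3`. -/
private lemma domb_zmod : ∀ n : ℕ, (∑ k ∈ Finset.range (n + 1), T n k) = 1 := by
  intro n
  induction n using Nat.strong_induction_on with
  | _ n ih =>
    rcases Nat.lt_or_ge n 3 with hn | hn
    · interval_cases n <;> simp [T, Finset.sum_range_succ] <;> decide
    · obtain ⟨m, r, hr, rfl⟩ : ∃ m r, r < 3 ∧ n = 3 * m + r :=
        ⟨n / 3, n % 3, Nat.mod_lt _ (by norm_num), by omega⟩
      have hm : 0 < m := by omega
      -- extend the sum to `range (3 * (m + 1))`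
      have hext : (∑ k ∈ Finset.range (3 * m + r + 1), T (3 * m + r) k)
          = ∑ k ∈ Finset.range (3 * (m + 1)), T (3 * m + r) k := by
        apply Finset.sum_subset
        · intro x hx
          simp only [Finset.mem_range] at *
          omega
        · intro x _ hx
          simp only [Finset.mem_range] at hx
          have : 3 * m + r < x := by omega
          simp [T, Nat.choose_eq_zero_of_lt this]
      rw [hext]
      have hre : (∑ k ∈ Finset.range (3 * (m + 1)), T (3 * m + r) k)
          = ∑ p ∈ Finset.range (m + 1) ×ˢ Finset.range 3, T (3 * m + r) (3 * p.1 + p.2) := by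
        apply Finset.sum_nbij' (fun k => (k / 3, k % 3)) (fun p => 3 * p.1 + p.2)
        · intro k hk
          simp only [Finset.mem_range, Finset.mem_product] at *
          omega
        · intro p hp
          simp only [Finset.mem_range, Finset.mem_product] at *
          omega
        · intro k hk; omega
        · intro p hp
          simp only [Finset.mem_range, Finset.mem_product] at hp
          ext <;> simp <;> omega
        · intro k hk
          congr 1
          omega
      rw [hre]
      have : (∑ p ∈ Finset.range (m + 1) ×ˢ Finset.range 3, T (3 * m + r) (3 * p.1 + p.2))
          = (∑ j ∈ Finset.range (m + 1), T m j) * (∑ s ∈ Finset.range 3, T r s) := by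
        rw [Finset.sum_mul_sum, ← Finset.sum_product']
        apply Finset.sum_congr rfl
        intro p hp
        simp only [Finset.mem_product, Finset.mem_range] at hp
        exact term_mul m r p.1 p.2 hr hp.2
      rw [this, ih m (by omega)]
      have hrsum : (∑ s ∈ Finset.range 3, T r s) = ∑ s ∈ Finset.range (r + 1), T r s := by
        symm
        apply Finset.sum_subset
        · intro x hx; simp only [Finset.mem_range] at *; omega
        · intro x _ hx
          simp only [Finset.mem_range] at hx
          have : r < x := by omega
          simp [T, Nat.choose_eq_zero_of_lt this]
      rw [hrsum, ih r (by omega), one_mul]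

theorem domb_mod_three (n : ℕ) :
    (∑ k ∈ Finset.range (n + 1),
        (n.choose k) ^ 2 * (2 * k).choose k * (2 * (n - k)).choose (n - k)) ≡ 1 [MOD 3] := by
  have h := domb_zmod n
  rw [show (1 : ZMod 3) = ((1 : ℕ) : ZMod 3) by norm_num] at h
  rw [← ZMod.natCast_eq_natCast_iff]
  rw [← h]
  push_cast [T]
  rfl
end

section
/- For any positive integer n, the second binomial transform of the Domb numbers satisfies 3 ∣ ∑_{m=0}^n C(n,m) ∑_{k=0}^m C(m,k) D_k, where D_k is the k-th Domb number. -/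
open Finset

lemma lucas3_s8 (n k : ℕ) : ((n.choose k : ZMod 3)) =
    ((n % 3).choose (k % 3) : ZMod 3) * ((n / 3).choose (k / 3) : ZMod 3) := by
  haveI : Fact (Nat.Prime 3) := ⟨by norm_num⟩
  have h := Choose.choose_modEq_choose_mod_mul_choose_div_nat (p := 3) (n := n) (k := k)
  have := (ZMod.natCast_eq_natCast_iff _ _ _).mpr h
  push_cast at this
  exact this

lemma lucas3' (n k a b c d : ℕ) (h1 : n % 3 = a) (h2 : n / 3 = b)
    (h3 : k % 3 = c) (h4 : k / 3 = d) :
    ((n.choose k : ZMod 3)) = (a.choose c : ZMod 3) * (b.choose d : ZMod 3) := by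
  rw [lucas3_s8, h1, h2, h3, h4]

lemma sum_range_three_mul {M : Type*} [AddCommMonoid M] (f : ℕ → M) (q : ℕ) :
    ∑ j ∈ Finset.range (3*q), f j
      = ∑ a ∈ Finset.range q, (f (3*a) + f (3*a+1) + f (3*a+2)) := by
  induction q with
  | zero => simp
  | succ n ih =>
    rw [Finset.sum_range_succ, ← ih, show 3*(n+1) = (3*n+1+1)+1 by ring,
      Finset.sum_range_succ, Finset.sum_range_succ, show 3*n+1+1 = 3*n+2 by ring,
      Finset.sum_range_succ]
    abel

lemma sum_extend_split (F : ℕ → ZMod 3) (q r : ℕ) (hr : r < 3)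
    (hz : ∀ j, 3*q+r < j → F j = 0) :
    ∑ j ∈ Finset.range (3*q+r+1), F j
      = ∑ a ∈ Finset.range (q+1), (F (3*a) + F (3*a+1) + F (3*a+2)) := by
  rw [← sum_range_three_mul, show 3*(q+1) = 3*q+3 by ring]
  apply Finset.sum_subset (Finset.range_subset_range.mpr (by omega))
  intro j hj hj2
  exact hz j (by simp only [Finset.mem_range] at hj2 ⊢; omega)

lemma step (q r : ℕ) (hr : r < 3) :
    (∑ j ∈ Finset.range (3*q+r+1), ((3*q+r).choose j : ZMod 3)^2
        * ((2*j).choose j : ZMod 3) * ((2*(3*q+r-j)).choose (3*q+r-j) : ZMod 3))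
  = ∑ a ∈ Finset.range (q+1), ((q.choose a : ZMod 3))^2
        * ((2*a).choose a : ZMod 3) * ((2*(q-a)).choose (q-a) : ZMod 3) := by
  have hz : ∀ j, 3*q+r < j → (((3*q+r).choose j : ZMod 3)^2
      * ((2*j).choose j : ZMod 3) * ((2*(3*q+r-j)).choose (3*q+r-j) : ZMod 3)) = 0 := by
    intro j hj
    have : (3*q+r).choose j = 0 := Nat.choose_eq_zero_of_lt (by omega)
    simp [this]
  rw [sum_extend_split _ q r hr hz]
  apply Finset.sum_congr rfl
  intro a ha
  have ha' : a ≤ q := by simp only [Finset.mem_range] at ha; omega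
  interval_cases r
  · -- r = 0
    have z1 : ((3*q+0).choose (3*a+1) : ZMod 3) = 0 := by
      rw [lucas3' _ _ 0 q 1 a (by omega) (by omega) (by omega) (by omega)]; simp
    have z2 : ((3*q+0).choose (3*a+2) : ZMod 3) = 0 := by
      rw [lucas3' _ _ 0 q 2 a (by omega) (by omega) (by omega) (by omega)]; simp
    have e1 : ((3*q+0).choose (3*a) : ZMod 3) = (q.choose a : ZMod 3) := by
      rw [lucas3' _ _ 0 q 0 a (by omega) (by omega) (by omega) (by omega)]; simp
    have e2 : ((2*(3*a)).choose (3*a) : ZMod 3) = ((2*a).choose a : ZMod 3) := by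
      rw [lucas3' _ _ 0 (2*a) 0 a (by omega) (by omega) (by omega) (by omega)]; simp
    have e3 : ((2*(3*q+0-3*a)).choose (3*q+0-3*a) : ZMod 3)
        = ((2*(q-a)).choose (q-a) : ZMod 3) := by
      rw [show 3*q+0-3*a = 3*(q-a) by omega]
      rw [lucas3' _ _ 0 (2*(q-a)) 0 (q-a) (by omega) (by omega) (by omega) (by omega)]; simp
    rw [z1, z2, e1, e2, e3]
    ring
  · -- r = 1
    have e10 : ((3*q+1).choose (3*a) : ZMod 3) = (q.choose a : ZMod 3) := by
      rw [lucas3' _ _ 1 q 0 a (by omega) (by omega) (by omega) (by omega)]; simp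
    have e11 : ((3*q+1).choose (3*a+1) : ZMod 3) = (q.choose a : ZMod 3) := by
      rw [lucas3' _ _ 1 q 1 a (by omega) (by omega) (by omega) (by omega)]; simp
    have z12 : ((3*q+1).choose (3*a+2) : ZMod 3) = 0 := by
      rw [lucas3' _ _ 1 q 2 a (by omega) (by omega) (by omega) (by omega)]; simp
    have e20 : ((2*(3*a)).choose (3*a) : ZMod 3) = ((2*a).choose a : ZMod 3) := by
      rw [lucas3' _ _ 0 (2*a) 0 a (by omega) (by omega) (by omega) (by omega)]; simp
    have e21 : ((2*(3*a+1)).choose (3*a+1) : ZMod 3) = 2 * ((2*a).choose a : ZMod 3) := by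
      rw [lucas3' _ _ 2 (2*a) 1 a (by omega) (by omega) (by omega) (by omega)]
      norm_num [mul_comm]
    have e30 : ((2*(3*q+1-3*a)).choose (3*q+1-3*a) : ZMod 3)
        = 2 * ((2*(q-a)).choose (q-a) : ZMod 3) := by
      rw [show 3*q+1-3*a = 3*(q-a)+1 by omega]
      rw [lucas3' _ _ 2 (2*(q-a)) 1 (q-a) (by omega) (by omega) (by omega) (by omega)]
      norm_num [mul_comm]
    have e31 : ((2*(3*q+1-(3*a+1))).choose (3*q+1-(3*a+1)) : ZMod 3)
        = ((2*(q-a)).choose (q-a) : ZMod 3) := by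
      rw [show 3*q+1-(3*a+1) = 3*(q-a) by omega]
      rw [lucas3' _ _ 0 (2*(q-a)) 0 (q-a) (by omega) (by omega) (by omega) (by omega)]; simp
    rw [e10, e11, z12, e20, e21, e30, e31]
    have h3 : (3 : ZMod 3) = 0 := rfl
    linear_combination ((q.choose a : ZMod 3)^2 * ((2*a).choose a : ZMod 3)
      * ((2*(q-a)).choose (q-a) : ZMod 3)) * h3
  · -- r = 2
    have z20 : ((2*(3*q+2-3*a)).choose (3*q+2-3*a) : ZMod 3) = 0 := by
      rw [show 3*q+2-3*a = 3*(q-a)+2 by omega]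
      rw [lucas3' _ _ 1 (2*(q-a)+1) 2 (q-a) (by omega) (by omega) (by omega) (by omega)]
      simp
    have e21 : ((3*q+2).choose (3*a+1) : ZMod 3) = 2 * (q.choose a : ZMod 3) := by
      rw [lucas3' _ _ 2 q 1 a (by omega) (by omega) (by omega) (by omega)]
      norm_num
    have e2j : ((2*(3*a+1)).choose (3*a+1) : ZMod 3) = 2 * ((2*a).choose a : ZMod 3) := by
      rw [lucas3' _ _ 2 (2*a) 1 a (by omega) (by omega) (by omega) (by omega)]
      norm_num [mul_comm]
    have e2d : ((2*(3*q+2-(3*a+1))).choose (3*q+2-(3*a+1)) : ZMod 3)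
        = 2 * ((2*(q-a)).choose (q-a) : ZMod 3) := by
      rw [show 3*q+2-(3*a+1) = 3*(q-a)+1 by omega]
      rw [lucas3' _ _ 2 (2*(q-a)) 1 (q-a) (by omega) (by omega) (by omega) (by omega)]
      norm_num [mul_comm]
    have z22 : ((2*(3*a+2)).choose (3*a+2) : ZMod 3) = 0 := by
      rw [lucas3' _ _ 1 (2*a+1) 2 a (by omega) (by omega) (by omega) (by omega)]
      simp
    rw [z20, e21, e2j, e2d, z22]
    have h3 : (3 : ZMod 3) = 0 := rfl
    linear_combination (5 * (q.choose a : ZMod 3)^2 * ((2*a).choose a : ZMod 3)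
      * ((2*(q-a)).choose (q-a) : ZMod 3)) * h3

lemma domb_mod3 (k : ℕ) :
    (∑ j ∈ Finset.range (k+1), ((k.choose j : ZMod 3))^2
        * ((2*j).choose j : ZMod 3) * ((2*(k-j)).choose (k-j) : ZMod 3)) = 1 := by
  induction k using Nat.strong_induction_on with
  | _ k ih =>
    rcases Nat.eq_zero_or_pos k with rfl | hk
    · simp
    · have hq : k / 3 < k := Nat.div_lt_self hk (by norm_num)
      have hk3 : k = 3*(k/3) + k%3 := by omega
      rw [hk3, step (k/3) (k%3) (by omega)]
      exact ih _ hq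

theorem domb_second_binomial_transform_div_three (n : ℕ) (hn : 1 ≤ n) :
    3 ∣ ∑ m ∈ Finset.range (n + 1), n.choose m *
        ∑ k ∈ Finset.range (m + 1), m.choose k *
          ∑ j ∈ Finset.range (k + 1),
            (k.choose j) ^ 2 * (2 * j).choose j * (2 * (k - j)).choose (k - j) := by
  rw [← ZMod.natCast_eq_zero_iff _ 3]
  push_cast
  have h1 : ∀ m k : ℕ, k ∈ Finset.range (m+1) →
      (m.choose k : ZMod 3) * (∑ j ∈ Finset.range (k+1), ((k.choose j : ZMod 3))^2
        * ((2*j).choose j : ZMod 3) * ((2*(k-j)).choose (k-j) : ZMod 3))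
      = (m.choose k : ZMod 3) := by
    intro m k _
    rw [domb_mod3, mul_one]
  calc (∑ m ∈ Finset.range (n + 1), (n.choose m : ZMod 3) *
        ∑ k ∈ Finset.range (m + 1), (m.choose k : ZMod 3) *
          ∑ j ∈ Finset.range (k + 1),
            ((k.choose j : ZMod 3)) ^ 2 * ((2 * j).choose j : ZMod 3)
              * ((2 * (k - j)).choose (k - j) : ZMod 3))
      = ∑ m ∈ Finset.range (n + 1), (n.choose m : ZMod 3) *
          ∑ k ∈ Finset.range (m + 1), (m.choose k : ZMod 3) := by
        apply Finset.sum_congr rfl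
        intro m _
        rw [Finset.sum_congr rfl (h1 m)]
    _ = ∑ m ∈ Finset.range (n + 1), (2:ZMod 3)^m * 1^(n-m) * (n.choose m : ZMod 3) := by
        apply Finset.sum_congr rfl
        intro m _
        rw [← Nat.cast_sum, Nat.sum_range_choose]
        push_cast
        ring
    _ = ((2:ZMod 3) + 1)^n := (add_pow 2 1 n).symm
    _ = 0 := by
        rw [show (2:ZMod 3) + 1 = 0 from rfl]
        exact zero_pow (by omega)
end

section
/- For every nonnegative integer m, the Catalan–Larcombe–French number P_m := ∑_{k=0}^m C(2k,k)^2 C(2(m−k),m−k)^2 / C(m,k) equals 2^m · D_m^(1), where D_m^(1) = ∑_{k=0}^m C(m,k) C(2k,k) C(2(m−k),m−k). -/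
open Finset Nat

def dd : ℕ → ℕ
  | 0 => 1
  | k+1 => (2*k+1) * dd k

lemma dd_succ (k : ℕ) : dd (k+1) = (2*k+1) * dd k := rfl

lemma dd_zero : dd 0 = 1 := rfl
lemma dd_one : dd 1 = 1 := rfl

lemma dd_cast_succ (k : ℕ) : ((dd (k+1) : ℚ)) = (2*(k:ℚ)+1) * (dd k : ℚ) := by
  rw [dd_succ]; push_cast; ring

lemma fact_cast_succ (m : ℕ) : (((m+1))! : ℚ) = ((m:ℚ)+1) * ((m)! : ℚ) := by
  rw [Nat.factorial_succ]; push_cast; ring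

noncomputable def fL (n k : ℕ) : ℚ := (n.choose k : ℚ) * (dd k : ℚ)^2 * (dd (n-k) : ℚ)^2

noncomputable def fR (n k : ℕ) : ℚ :=
  ((n)! : ℚ) * (n.choose k : ℚ)^2 * (dd k : ℚ) * (dd (n-k) : ℚ)

noncomputable def gL (n : ℕ) : ℕ → ℚ
  | 0 => 0
  | k+1 => (2*(k:ℚ)+1)^2 * (2*((n:ℚ)+2)^2 - 2*((n:ℚ)+2)*((k:ℚ)+1) - 1) *
      ((n+1).choose k : ℚ) * (dd k : ℚ)^2 * (dd (n-k) : ℚ)^2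

noncomputable def gR (n : ℕ) : ℕ → ℚ
  | 0 => 0
  | k+1 => -(2*(k:ℚ)+1) * (2*((n:ℚ)+2)^2 - 3*((n:ℚ)+2) - 2*((n:ℚ)+1)*((k:ℚ)+1)) *
      (((n+1))! : ℚ) * ((n+1).choose k : ℚ)^2 * (dd k : ℚ) * (dd (n-k) : ℚ)

lemma gL_succ (n k : ℕ) : gL n (k+1) = (2*(k:ℚ)+1)^2 *
    (2*((n:ℚ)+2)^2 - 2*((n:ℚ)+2)*((k:ℚ)+1) - 1) *
    ((n+1).choose k : ℚ) * (dd k : ℚ)^2 * (dd (n-k) : ℚ)^2 := rfl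

lemma gR_succ (n k : ℕ) : gR n (k+1) = -(2*(k:ℚ)+1) *
    (2*((n:ℚ)+2)^2 - 3*((n:ℚ)+2) - 2*((n:ℚ)+1)*((k:ℚ)+1)) *
    (((n+1))! : ℚ) * ((n+1).choose k : ℚ)^2 * (dd k : ℚ) * (dd (n-k) : ℚ) := rfl

lemma mainL (k j : ℕ) :
    fL (k+1+j+2) (k+1) - (2*(3*((k:ℚ)+1+j)^2+9*((k:ℚ)+1+j)+7)) * fL (k+1+j+1) (k+1)
      + 8*((k:ℚ)+1+j+1)^4 * fL (k+1+j) (k+1)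
    = gL (k+1+j) (k+1+1) - gL (k+1+j) (k+1) := by
  have e1 : k+1+j+2 - (k+1) = j+2 := by omega
  have e2 : k+1+j+1 - (k+1) = j+1 := by omega
  have e3 : k+1+j - (k+1) = j := by omega
  have e4 : k+1+j - k = j+1 := by omega
  have c1 : ((k+1+j+2).choose (k+1) : ℚ) = ((k+1+j+2)! : ℚ) / (((k+1))! * ((j+2))!) := by
    rw [Nat.cast_choose ℚ (by omega), e1]
  have c2 : ((k+1+j+1).choose (k+1) : ℚ) = ((k+1+j+1)! : ℚ) / (((k+1))! * ((j+1))!) := by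
    rw [Nat.cast_choose ℚ (by omega), e2]
  have c3 : ((k+1+j).choose (k+1) : ℚ) = ((k+1+j)! : ℚ) / (((k+1))! * ((j))!) := by
    rw [Nat.cast_choose ℚ (by omega), e3]
  have c4 : ((k+1+j+1).choose k : ℚ) = ((k+1+j+1)! : ℚ) / (((k))! * ((j+2))!) := by
    rw [Nat.cast_choose ℚ (by omega), show k+1+j+1-k = j+2 by omega]
  have F1 : ((k+1+j+2)! : ℚ) = ((k:ℚ)+j+3)*((k:ℚ)+j+2)*((k:ℚ)+j+1)*((k+j)! : ℚ) := by
    rw [show k+1+j+2 = ((k+j)+2)+1 by omega, fact_cast_succ,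
        show (k+j)+2 = ((k+j)+1)+1 by omega, fact_cast_succ, fact_cast_succ]
    push_cast; ring
  have F2 : ((k+1+j+1)! : ℚ) = ((k:ℚ)+j+2)*((k:ℚ)+j+1)*((k+j)! : ℚ) := by
    rw [show k+1+j+1 = ((k+j)+1)+1 by omega, fact_cast_succ, fact_cast_succ]
    push_cast; ring
  have F3 : ((k+1+j)! : ℚ) = ((k:ℚ)+j+1)*((k+j)! : ℚ) := by
    rw [show k+1+j = (k+j)+1 by omega, fact_cast_succ]; push_cast; ring
  have Fk : (((k+1))! : ℚ) = ((k:ℚ)+1)*((k)! : ℚ) := fact_cast_succ k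
  have Fj2 : (((j+2))! : ℚ) = ((j:ℚ)+2)*((j:ℚ)+1)*((j)! : ℚ) := by
    rw [show j+2 = (j+1)+1 by omega, fact_cast_succ, fact_cast_succ]; push_cast; ring
  have Fj1 : (((j+1))! : ℚ) = ((j:ℚ)+1)*((j)! : ℚ) := fact_cast_succ j
  have hk : ((k)! : ℚ) ≠ 0 := by positivity
  have hj : ((j)! : ℚ) ≠ 0 := by positivity
  have hkj : (((k+j))! : ℚ) ≠ 0 := by positivity
  simp only [fL, gL, e1, e2, e3, e4, show k+1+j+1 = (k+1+j)+1 from rfl]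
  rw [show (k+1+j)+1 = k+1+j+1 from rfl]
  simp only [c1, c2, c3, c4, F1, F2, F3, Fk, Fj2, Fj1, dd_cast_succ]
  push_cast
  field_simp
  ring

lemma mainR (k j : ℕ) :
    fR (k+1+j+2) (k+1) - (2*(3*((k:ℚ)+1+j)^2+9*((k:ℚ)+1+j)+7)) * fR (k+1+j+1) (k+1)
      + 8*((k:ℚ)+1+j+1)^4 * fR (k+1+j) (k+1)
    = gR (k+1+j) (k+1+1) - gR (k+1+j) (k+1) := by
  have e1 : k+1+j+2 - (k+1) = j+2 := by omega
  have e2 : k+1+j+1 - (k+1) = j+1 := by omega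
  have e3 : k+1+j - (k+1) = j := by omega
  have e4 : k+1+j - k = j+1 := by omega
  have c1 : ((k+1+j+2).choose (k+1) : ℚ) = ((k+1+j+2)! : ℚ) / (((k+1))! * ((j+2))!) := by
    rw [Nat.cast_choose ℚ (by omega), e1]
  have c2 : ((k+1+j+1).choose (k+1) : ℚ) = ((k+1+j+1)! : ℚ) / (((k+1))! * ((j+1))!) := by
    rw [Nat.cast_choose ℚ (by omega), e2]
  have c3 : ((k+1+j).choose (k+1) : ℚ) = ((k+1+j)! : ℚ) / (((k+1))! * ((j))!) := by
    rw [Nat.cast_choose ℚ (by omega), e3]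
  have c4 : ((k+1+j+1).choose k : ℚ) = ((k+1+j+1)! : ℚ) / (((k))! * ((j+2))!) := by
    rw [Nat.cast_choose ℚ (by omega), show k+1+j+1-k = j+2 by omega]
  have F1 : ((k+1+j+2)! : ℚ) = ((k:ℚ)+j+3)*((k:ℚ)+j+2)*((k:ℚ)+j+1)*((k+j)! : ℚ) := by
    rw [show k+1+j+2 = ((k+j)+2)+1 by omega, fact_cast_succ,
        show (k+j)+2 = ((k+j)+1)+1 by omega, fact_cast_succ, fact_cast_succ]
    push_cast; ring
  have F2 : ((k+1+j+1)! : ℚ) = ((k:ℚ)+j+2)*((k:ℚ)+j+1)*((k+j)! : ℚ) := by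
    rw [show k+1+j+1 = ((k+j)+1)+1 by omega, fact_cast_succ, fact_cast_succ]
    push_cast; ring
  have F3 : ((k+1+j)! : ℚ) = ((k:ℚ)+j+1)*((k+j)! : ℚ) := by
    rw [show k+1+j = (k+j)+1 by omega, fact_cast_succ]; push_cast; ring
  have Fk : (((k+1))! : ℚ) = ((k:ℚ)+1)*((k)! : ℚ) := fact_cast_succ k
  have Fj2 : (((j+2))! : ℚ) = ((j:ℚ)+2)*((j:ℚ)+1)*((j)! : ℚ) := by
    rw [show j+2 = (j+1)+1 by omega, fact_cast_succ, fact_cast_succ]; push_cast; ring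
  have Fj1 : (((j+1))! : ℚ) = ((j:ℚ)+1)*((j)! : ℚ) := fact_cast_succ j
  have hk : ((k)! : ℚ) ≠ 0 := by positivity
  have hj : ((j)! : ℚ) ≠ 0 := by positivity
  have hkj : (((k+j))! : ℚ) ≠ 0 := by positivity
  simp only [fR, gR, e1, e2, e3, e4, show k+1+j+1 = (k+1+j)+1 from rfl]
  rw [show (k+1+j)+1 = k+1+j+1 from rfl]
  simp only [c1, c2, c3, c4, F1, F2, F3, Fk, Fj2, Fj1, dd_cast_succ]
  push_cast
  field_simp
  ring

lemma ptL (n k : ℕ) :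
    fL (n+2) k - (2*(3*(n:ℚ)^2+9*(n:ℚ)+7)) * fL (n+1) k + 8*((n:ℚ)+1)^4 * fL n k
      = gL n (k+1) - gL n k := by
  have D1 : ((dd (n+1) : ℚ)) = (2*(n:ℚ)+1) * (dd n : ℚ) := dd_cast_succ n
  have D2 : ((dd (n+2) : ℚ)) = (2*(n:ℚ)+3) * ((2*(n:ℚ)+1) * (dd n : ℚ)) := by
    rw [show n+2 = (n+1)+1 by omega, dd_cast_succ, dd_cast_succ]; push_cast; ring
  rcases Nat.lt_or_ge k (n+1) with hk | hk
  · rcases k with _ | k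
    · -- k = 0
      simp only [fL, gL, Nat.choose_zero_right, Nat.sub_zero, Nat.cast_one, dd_zero,
        gL_succ, D1, D2]
      push_cast [Nat.choose_zero_right]
      ring
    · obtain ⟨j, rfl⟩ : ∃ j, n = k+1+j := ⟨n - (k+1), by omega⟩
      have := mainL k j
      push_cast at this ⊢
      convert this using 2 <;> push_cast <;> ring
  · have : k = n+1 ∨ k = n+2 ∨ n+3 ≤ k := by omega
    rcases this with rfl | rfl | hk3
    · -- k = n+1
      have s1 : n+2 - (n+1) = 1 := by omega
      have s2 : n+1 - (n+1) = 0 := by omega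
      have s3 : n - (n+1) = 0 := by omega
      have s4 : n - n = 0 := by omega
      have ch1 : (n+2).choose (n+1) = n+2 := by
        rw [show n+2 = (n+1)+1 by omega]; exact Nat.choose_succ_self_right (n+1)
      have ch2 : (n+1).choose (n+1) = 1 := Nat.choose_self _
      have ch3 : n.choose (n+1) = 0 := Nat.choose_eq_zero_of_lt (by omega)
      have ch4 : (n+1).choose n = n+1 := Nat.choose_succ_self_right n
      rw [show (n+1)+1 = n+2 by omega]
      simp only [fL, gL, gL_succ, s1, s2, s3, s4, ch1, ch2, ch3, ch4, dd_zero, dd_one,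
        Nat.choose_self, D1, D2]
      push_cast
      ring
    · -- k = n+2
      have s1 : n+2 - (n+2) = 0 := by omega
      have s2 : n+1 - (n+2) = 0 := by omega
      have s3 : n - (n+2) = 0 := by omega
      have s4 : n - (n+1) = 0 := by omega
      have ch2 : (n+1).choose (n+2) = 0 := Nat.choose_eq_zero_of_lt (by omega)
      have ch3 : n.choose (n+2) = 0 := Nat.choose_eq_zero_of_lt (by omega)
      rw [show (n+2)+1 = (n+2)+1 from rfl]
      simp only [fL, gL, gL_succ, s1, s2, s3, s4, ch2, ch3, dd_zero, Nat.choose_self,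
        Nat.choose_succ_self_right, D1, D2]
      push_cast
      ring
    · -- k ≥ n+3
      obtain ⟨i, rfl⟩ : ∃ i, k = (n+3)+i := ⟨k - (n+3), by omega⟩
      have ch1 : (n+2).choose (n+3+i) = 0 := Nat.choose_eq_zero_of_lt (by omega)
      have ch2 : (n+1).choose (n+3+i) = 0 := Nat.choose_eq_zero_of_lt (by omega)
      have ch3 : n.choose (n+3+i) = 0 := Nat.choose_eq_zero_of_lt (by omega)
      have ch4 : (n+1).choose (n+3+i) = 0 := Nat.choose_eq_zero_of_lt (by omega)
      have ch5 : (n+1).choose (n+2+i) = 0 := Nat.choose_eq_zero_of_lt (by omega)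
      rw [show n+3+i = (n+2+i)+1 by omega]
      simp only [fL, gL, gL_succ, show (n+2+i)+1+1 = ((n+2+i)+1)+1 from rfl]
      rw [show (n+2+i)+1 = n+3+i by omega]
      simp only [ch1, ch2, ch3, ch4, ch5, Nat.cast_zero]
      ring

lemma ptR (n k : ℕ) (hkn : k ≤ n) :
    fR (n+2) k - (2*(3*(n:ℚ)^2+9*(n:ℚ)+7)) * fR (n+1) k + 8*((n:ℚ)+1)^4 * fR n k
      = gR n (k+1) - gR n k := by
  rcases k with _ | k
  · -- k = 0
    have D1 : ((dd (n+1) : ℚ)) = (2*(n:ℚ)+1) * (dd n : ℚ) := dd_cast_succ n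
    have D2 : ((dd (n+2) : ℚ)) = (2*(n:ℚ)+3) * ((2*(n:ℚ)+1) * (dd n : ℚ)) := by
      rw [show n+2 = (n+1)+1 by omega, dd_cast_succ, dd_cast_succ]; push_cast; ring
    have F1 : (((n+2))! : ℚ) = ((n:ℚ)+2)*((n:ℚ)+1)*((n)! : ℚ) := by
      rw [show n+2 = (n+1)+1 by omega, fact_cast_succ, fact_cast_succ]; push_cast; ring
    have F2 : (((n+1))! : ℚ) = ((n:ℚ)+1)*((n)! : ℚ) := fact_cast_succ n
    simp only [fR, gR, Nat.choose_zero_right, Nat.sub_zero, Nat.cast_one, dd_zero,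
      gR_succ, D1, D2, F1, F2]
    push_cast [Nat.choose_zero_right]
    ring
  · obtain ⟨j, rfl⟩ : ∃ j, n = k+1+j := ⟨n - (k+1), by omega⟩
    have := mainR k j
    push_cast at this ⊢
    convert this using 2 <;> push_cast <;> ring

noncomputable def LL (n : ℕ) : ℚ := ∑ k ∈ range (n+1), fL n k
noncomputable def RR (n : ℕ) : ℚ := ∑ k ∈ range (n+1), fR n k

lemma recL (n : ℕ) :
    LL (n+2) = (2*(3*(n:ℚ)^2+9*(n:ℚ)+7)) * LL (n+1) - 8*((n:ℚ)+1)^4 * LL n := by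
  have T : ∑ k ∈ range (n+3), (fL (n+2) k - (2*(3*(n:ℚ)^2+9*(n:ℚ)+7)) * fL (n+1) k
      + 8*((n:ℚ)+1)^4 * fL n k) = ∑ k ∈ range (n+3), (gL n (k+1) - gL n k) :=
    Finset.sum_congr rfl (fun k _ => ptL n k)
  rw [Finset.sum_range_sub (gL n)] at T
  have gz : gL n (n+3) = 0 := by
    rw [show n+3 = (n+2)+1 by omega, gL_succ, Nat.choose_eq_zero_of_lt (by omega)]
    push_cast; ring
  have g0 : gL n 0 = 0 := rfl
  rw [gz, g0, sub_zero] at T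
  have hs : ∀ (f : ℕ → ℚ), ∑ k ∈ range (n+3), f k
      = (∑ k ∈ range (n+1), f k) + f (n+1) + f (n+2) := by
    intro f
    rw [show n+3 = (n+2)+1 by omega, Finset.sum_range_succ,
        show n+2 = (n+1)+1 by omega, Finset.sum_range_succ]
  simp only [Finset.sum_sub_distrib, Finset.sum_add_distrib, ← Finset.mul_sum] at T
  rw [hs (fL (n+2)), hs (fL (n+1)), hs (fL n)] at T
  have z1 : fL (n+1) (n+2) = 0 := by
    simp [fL, Nat.choose_eq_zero_of_lt (show n+1 < n+2 by omega)]
  have z2 : fL n (n+1) = 0 := by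
    simp [fL, Nat.choose_eq_zero_of_lt (show n < n+1 by omega)]
  have z3 : fL n (n+2) = 0 := by
    simp [fL, Nat.choose_eq_zero_of_lt (show n < n+2 by omega)]
  rw [z1, z2, z3] at T
  have e2 : LL (n+2) = (∑ k ∈ range (n+1), fL (n+2) k) + fL (n+2) (n+1) + fL (n+2) (n+2) := by
    rw [LL, show n+2+1 = n+3 by omega, hs (fL (n+2))]
  have e1 : LL (n+1) = (∑ k ∈ range (n+1), fL (n+1) k) + fL (n+1) (n+1) := by
    rw [LL, show n+1+1 = (n+1)+1 from rfl, Finset.sum_range_succ]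
  rw [e1, e2, LL]
  linarith [T]

lemma recR (n : ℕ) :
    RR (n+2) = (2*(3*(n:ℚ)^2+9*(n:ℚ)+7)) * RR (n+1) - 8*((n:ℚ)+1)^4 * RR n := by
  have T : ∑ k ∈ range (n+1), (fR (n+2) k - (2*(3*(n:ℚ)^2+9*(n:ℚ)+7)) * fR (n+1) k
      + 8*((n:ℚ)+1)^4 * fR n k) = ∑ k ∈ range (n+1), (gR n (k+1) - gR n k) :=
    Finset.sum_congr rfl (fun k hk => ptR n k (by simpa using Nat.lt_succ_iff.mp (Finset.mem_range.mp hk)))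
  rw [Finset.sum_range_sub (gR n)] at T
  have g0 : gR n 0 = 0 := rfl
  rw [g0, sub_zero] at T
  -- edge identity: gR n (n+1) + fR (n+2) (n+1) + fR (n+2) (n+2) - c1 * fR (n+1) (n+1) = 0
  have D1 : ((dd (n+1) : ℚ)) = (2*(n:ℚ)+1) * (dd n : ℚ) := dd_cast_succ n
  have D2 : ((dd (n+2) : ℚ)) = (2*(n:ℚ)+3) * ((2*(n:ℚ)+1) * (dd n : ℚ)) := by
    rw [show n+2 = (n+1)+1 by omega, dd_cast_succ, dd_cast_succ]; push_cast; ring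
  have F1 : (((n+2))! : ℚ) = ((n:ℚ)+2)*((n:ℚ)+1)*((n)! : ℚ) := by
    rw [show n+2 = (n+1)+1 by omega, fact_cast_succ, fact_cast_succ]; push_cast; ring
  have F2 : (((n+1))! : ℚ) = ((n:ℚ)+1)*((n)! : ℚ) := fact_cast_succ n
  have edge : gR n (n+1) + fR (n+2) (n+1) + fR (n+2) (n+2)
      - (2*(3*(n:ℚ)^2+9*(n:ℚ)+7)) * fR (n+1) (n+1) = 0 := by
    have s1 : n+2 - (n+1) = 1 := by omega
    have s2 : n+2 - (n+2) = 0 := by omega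
    have s3 : n+1 - (n+1) = 0 := by omega
    have s4 : n - n = 0 := by omega
    have ch1 : (n+2).choose (n+1) = n+2 := by
      rw [show n+2 = (n+1)+1 by omega]; exact Nat.choose_succ_self_right (n+1)
    simp only [fR, gR_succ, s1, s2, s3, s4, ch1, Nat.choose_self,
      Nat.choose_succ_self_right, dd_zero, dd_one, D1, D2, F1, F2]
    push_cast
    ring
  have hs : ∀ (f : ℕ → ℚ), ∑ k ∈ range (n+3), f k
      = (∑ k ∈ range (n+1), f k) + f (n+1) + f (n+2) := by
    intro f
    rw [show n+3 = (n+2)+1 by omega, Finset.sum_range_succ,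
        show n+2 = (n+1)+1 by omega, Finset.sum_range_succ]
  simp only [Finset.sum_sub_distrib, Finset.sum_add_distrib, ← Finset.mul_sum] at T
  have z2 : fR n (n+1) = 0 := by
    simp [fR, Nat.choose_eq_zero_of_lt (show n < n+1 by omega)]
  have z3 : fR n (n+2) = 0 := by
    simp [fR, Nat.choose_eq_zero_of_lt (show n < n+2 by omega)]
  have z1 : fR (n+1) (n+2) = 0 := by
    simp [fR, Nat.choose_eq_zero_of_lt (show n+1 < n+2 by omega)]
  have e2 : RR (n+2) = (∑ k ∈ range (n+1), fR (n+2) k) + fR (n+2) (n+1) + fR (n+2) (n+2) := by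
    rw [RR, show n+2+1 = n+3 by omega, hs (fR (n+2))]
  have e1 : RR (n+1) = (∑ k ∈ range (n+1), fR (n+1) k) + fR (n+1) (n+1) := by
    rw [RR, Finset.sum_range_succ]
  rw [e1, e2, RR]
  linarith [T, edge]

lemma LLRR (n : ℕ) : LL n = RR n := by
  have key : ∀ n, LL n = RR n ∧ LL (n+1) = RR (n+1) := by
    intro n
    induction n with
    | zero =>
      constructor
      · simp [LL, RR, fL, fR, Finset.sum_range_succ]; norm_num [dd]
      · simp [LL, RR, fL, fR, Finset.sum_range_succ]; norm_num [dd]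
    | succ n ih =>
      refine ⟨ih.2, ?_⟩
      rw [show n+1+1 = n+2 from rfl, recL n, recR n, ih.1, ih.2]
  exact (key n).1

lemma two_mul_factorial (k : ℕ) : ((2*k))! = 2^k * (k)! * dd k := by
  induction k with
  | zero => rfl
  | succ k ih =>
    have : 2*(k+1) = ((2*k)+1)+1 := by omega
    rw [this, Nat.factorial_succ, Nat.factorial_succ, ih, dd_succ, Nat.factorial_succ]
    ring

lemma central_cast (k : ℕ) : ((2*k).choose k : ℚ) = 2^k * (dd k : ℚ) / ((k)! : ℚ) := by
  have h : ((2*k).choose k : ℚ) = (((2*k))! : ℚ) / (((k))! * ((2*k - k))!) :=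
    Nat.cast_choose ℚ (by omega)
  rw [h, show 2*k - k = k by omega, two_mul_factorial]
  have hk : ((k)! : ℚ) ≠ 0 := by positivity
  push_cast
  field_simp

lemma four_pow (k j : ℕ) : (4:ℚ)^(k+j) = (2:ℚ)^k*(2:ℚ)^k*((2:ℚ)^j*(2:ℚ)^j) := by
  rw [show (4:ℚ) = 2*2 by norm_num, mul_pow, pow_add]; ring

lemma termL (k j : ℕ) :
    ((2*k).choose k : ℚ)^2 * ((2*j).choose j : ℚ)^2 / ((k+j).choose k : ℚ)
      = (4:ℚ)^(k+j)/(((k+j))! : ℚ)^2 * fL (k+j) k := by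
  have hC : ((k+j).choose k : ℚ) = (((k+j))! : ℚ) / (((k))! * ((j))!) := by
    rw [Nat.cast_choose ℚ (by omega), show k+j-k = j by omega]
  have hk : ((k)! : ℚ) ≠ 0 := by positivity
  have hj : ((j)! : ℚ) ≠ 0 := by positivity
  have hkj : (((k+j))! : ℚ) ≠ 0 := by positivity
  rw [fL, show k+j-k = j by omega, central_cast, central_cast, hC, four_pow]
  field_simp

lemma termR (k j : ℕ) :
    (4:ℚ)^(k+j)/(((k+j))! : ℚ)^2 * fR (k+j) k
      = 2^(k+j) * (((k+j).choose k : ℚ) * ((2*k).choose k : ℚ) * ((2*j).choose j : ℚ)) := by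
  have hC : ((k+j).choose k : ℚ) = (((k+j))! : ℚ) / (((k))! * ((j))!) := by
    rw [Nat.cast_choose ℚ (by omega), show k+j-k = j by omega]
  have hk : ((k)! : ℚ) ≠ 0 := by positivity
  have hj : ((j)! : ℚ) ≠ 0 := by positivity
  have hkj : (((k+j))! : ℚ) ≠ 0 := by positivity
  rw [fR, show k+j-k = j by omega, central_cast, central_cast, hC, four_pow, pow_add]
  field_simp

theorem clf_eq_two_pow_mul_D (m : ℕ) :
    (∑ k ∈ Finset.range (m + 1),
        ((2 * k).choose k : ℚ) ^ 2 * ((2 * (m - k)).choose (m - k) : ℚ) ^ 2 /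
          (m.choose k : ℚ)) =
      2 ^ m * ∑ k ∈ Finset.range (m + 1),
        (m.choose k : ℚ) * ((2 * k).choose k : ℚ) * ((2 * (m - k)).choose (m - k) : ℚ) := by
  have step1 : (∑ k ∈ Finset.range (m + 1),
      ((2 * k).choose k : ℚ) ^ 2 * ((2 * (m - k)).choose (m - k) : ℚ) ^ 2 /
        (m.choose k : ℚ)) = (4:ℚ)^m/(((m))! : ℚ)^2 * LL m := by
    rw [LL, Finset.mul_sum]
    refine Finset.sum_congr rfl (fun k hk => ?_)
    have hkm : k ≤ m := Nat.lt_succ_iff.mp (Finset.mem_range.mp hk)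
    obtain ⟨j, hj⟩ : ∃ j, m = k + j := ⟨m - k, by omega⟩
    subst hj
    rw [show k+j-k = j by omega]
    exact termL k j
  have step2 : (2:ℚ) ^ m * (∑ k ∈ Finset.range (m + 1),
      (m.choose k : ℚ) * ((2 * k).choose k : ℚ) * ((2 * (m - k)).choose (m - k) : ℚ))
      = (4:ℚ)^m/(((m))! : ℚ)^2 * RR m := by
    rw [RR, Finset.mul_sum, Finset.mul_sum]
    refine Finset.sum_congr rfl (fun k hk => ?_)
    have hkm : k ≤ m := Nat.lt_succ_iff.mp (Finset.mem_range.mp hk)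
    obtain ⟨j, hj⟩ : ∃ j, m = k + j := ⟨m - k, by omega⟩
    subst hj
    rw [show k+j-k = j by omega]
    exact (termR k j).symm
  rw [step1, step2, LLRR]
end

section
/- For every positive integer m, the Apéry number b_m := ∑_{k=0}^m C(m,k)^2 C(m+k,k) is odd. -/
lemma even_central (k : ℕ) (hk : 1 ≤ k) : Even ((2 * k).choose k) := by
  obtain ⟨j, rfl⟩ := Nat.exists_eq_add_of_le hk
  have h1 : 2 * (1 + j) = (2 * j + 1) + 1 := by ring
  have h2 : (1 + j) = j + 1 := by ring
  rw [h1, h2, Nat.choose_succ_succ, Nat.choose_symm_half]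
  exact ⟨(2 * j + 1).choose j, rfl⟩

lemma term_even (m k : ℕ) (hk : 1 ≤ k) (hkm : k ≤ m) :
    Even ((m.choose k) ^ 2 * (m + k).choose k) := by
  have key : (m + k).choose (2 * k) * (2 * k).choose k
      = (m + k).choose k * (m + k - k).choose (2 * k - k) :=
    Nat.choose_mul (by omega)
  have h1 : m + k - k = m := by omega
  have h2 : 2 * k - k = k := by omega
  rw [h1, h2] at key
  have heven : Even ((m + k).choose k * m.choose k) := by
    rw [← key]
    exact (even_central k hk).mul_left _
  have : (m.choose k) ^ 2 * (m + k).choose k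
      = m.choose k * ((m + k).choose k * m.choose k) := by ring
  rw [this]
  exact heven.mul_left _

theorem apery_b_odd (m : ℕ) (hm : 1 ≤ m) :
    Odd (∑ k ∈ Finset.range (m + 1), (m.choose k) ^ 2 * (m + k).choose k) := by
  rw [Finset.sum_range_succ' (fun k => (m.choose k) ^ 2 * (m + k).choose k) m]
  have h0 : (m.choose 0) ^ 2 * (m + 0).choose 0 = 1 := by simp
  rw [h0]
  have heven : Even (∑ i ∈ Finset.range m,
      (m.choose (i + 1)) ^ 2 * (m + (i + 1)).choose (i + 1)) := by
    apply Finset.even_sum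
    intro i hi
    exact term_even m (i + 1) (by omega) (by simp at hi; omega)
  exact heven.add_one
end

section
/- For every nonnegative integer k, the Apéry number b_k := ∑_{j=0}^k C(k,j)^2 C(k+j,j) satisfies b_k ≡ 3^k (mod 5). -/
open Finset

private def B (k : ℕ) : ZMod 5 :=
  ∑ j ∈ Finset.range (k + 1), ((k.choose j) ^ 2 * ((k + j).choose j) : ℕ)

private lemma lucas5 (n k : ℕ) :
    ((n.choose k : ℕ) : ZMod 5)
      = ((n % 5).choose (k % 5) : ℕ) * ((n / 5).choose (k / 5) : ℕ) := by
  have : Fact (Nat.Prime 5) := ⟨by norm_num⟩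
  have h := @Choose.choose_modEq_choose_mod_mul_choose_div_nat n k 5 this
  have := (ZMod.natCast_eq_natCast_iff _ _ _).mpr h
  rw [this]; push_cast; ring

private lemma sum_range_mul_five (f : ℕ → ZMod 5) (n : ℕ) :
    ∑ j ∈ range (5 * n), f j = ∑ i ∈ range n, ∑ s ∈ range 5, f (5 * i + s) := by
  induction n with
  | zero => simp
  | succ n ih =>
    rw [Finset.sum_range_succ, ← ih, Nat.mul_succ,
      show 5 * n + 5 = (5*n+1)+1+1+1+1 by ring]
    simp [Finset.sum_range_succ, add_assoc]

private lemma Bsmall : ∀ r, r < 5 → B r = 3 ^ r := by decide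

example : True := trivial

private lemma Bstep (m r : ℕ) (hr : r < 5) : B (5 * m + r) = B m * B r := by
  have key : ∀ i s : ℕ, s < 5 →
      (((5*m+r).choose (5*i+s)) ^ 2 * ((5*m+r + (5*i+s)).choose (5*i+s)) : ℕ)
        = ((((m.choose i) ^ 2 * ((m+i).choose i) : ℕ) : ZMod 5)
          * (((r.choose s) ^ 2 * ((r+s).choose s) : ℕ) : ZMod 5)) := by
    intro i s hs
    have h1 : ((5*m+r).choose (5*i+s) : ZMod 5) = (r.choose s : ℕ) * (m.choose i : ℕ) := by
      rw [lucas5, show (5*m+r)%5 = r by omega, show (5*i+s)%5 = s by omega,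
        show (5*m+r)/5 = m by omega, show (5*i+s)/5 = i by omega]
    have h2 : (5*m+r + (5*i+s)) = 5 * (m + i) + (r + s) := by ring
    have h3 : ((5*m+r + (5*i+s)).choose (5*i+s) : ZMod 5)
        = (((r+s) % 5).choose s : ℕ) * ((m + i + (r+s)/5).choose i : ℕ) := by
      rw [h2, lucas5, show (5*(m+i)+(r+s))%5 = (r+s)%5 by omega,
        show (5*i+s)%5 = s by omega, show (5*i+s)/5 = i by omega,
        show (5*(m+i)+(r+s))/5 = m + i + (r+s)/5 by omega]
    have h4 : (((r+s).choose s : ℕ) : ZMod 5) = (((r+s) % 5).choose s : ℕ) := by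
      rw [lucas5]
      have : s % 5 = s := Nat.mod_eq_of_lt hs
      have : s / 5 = 0 := Nat.div_eq_of_lt hs
      simp [Nat.mod_eq_of_lt hs, Nat.div_eq_of_lt hs]
    have h5 : (((r+s) % 5).choose s : ℕ) * ((m + i + (r+s)/5).choose i : ℕ)
        = ((((r+s) % 5).choose s : ℕ) : ZMod 5) * ((m+i).choose i : ℕ) := by
      rcases Nat.lt_or_ge (r + s) 5 with h | h
      · rw [Nat.div_eq_of_lt h]; simp
      · have hz : ((r+s) % 5).choose s = 0 :=
          Nat.choose_eq_zero_of_lt (by omega)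
        rw [hz]; simp
    push_cast
    rw [h1, h3, h5, h4]
    ring
  -- extend B (5m+r) to a sum over range (5*(m+1))
  have e1 : B (5 * m + r)
      = ∑ j ∈ range (5 * (m+1)),
          (((((5*m+r).choose j) ^ 2 * ((5*m+r + j).choose j) : ℕ)) : ZMod 5) := by
    unfold B
    apply Finset.sum_subset
    · intro x hx; simp only [mem_range] at *; omega
    · intro x _ hx
      simp only [mem_range, not_lt] at hx
      have : (5*m+r).choose x = 0 := Nat.choose_eq_zero_of_lt (by omega)
      simp [this]
  have e2 : B r = ∑ s ∈ range 5, (((r.choose s) ^ 2 * ((r+s).choose s) : ℕ) : ZMod 5) := by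
    unfold B
    apply Finset.sum_subset
    · intro x hx; simp only [mem_range] at *; omega
    · intro x _ hx
      simp only [mem_range, not_lt] at hx
      have : r.choose x = 0 := Nat.choose_eq_zero_of_lt (by omega)
      simp [this]
  rw [e1, sum_range_mul_five, e2]
  unfold B
  rw [Finset.sum_mul_sum]
  refine Finset.sum_congr rfl fun i _ => ?_
  refine Finset.sum_congr rfl fun s hs => ?_
  simp only [mem_range] at hs
  exact key i s hs

private lemma Bval (k : ℕ) : B k = 3 ^ k := by
  induction k using Nat.strong_induction_on with
  | _ k ih =>
    rcases Nat.lt_or_ge k 5 with h | h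
    · exact Bsmall k h
    · have hk : k = 5 * (k / 5) + k % 5 := by omega
      have hq : k / 5 < k := by omega
      calc B k = B (5 * (k/5) + k % 5) := by rw [← hk]
        _ = B (k/5) * B (k % 5) := Bstep _ _ (Nat.mod_lt _ (by norm_num))
        _ = 3 ^ (k/5) * 3 ^ (k % 5) := by
            rw [ih _ hq, Bsmall _ (Nat.mod_lt _ (by norm_num))]
        _ = 3 ^ k := by
            have h35 : (3 : ZMod 5) ^ 5 = 3 := by decide
            conv_rhs => rw [hk]
            rw [pow_add, pow_mul, h35]

theorem apery_b_mod_five (k : ℕ) :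
    (∑ j ∈ Finset.range (k + 1), (k.choose j) ^ 2 * (k + j).choose j) ≡ 3 ^ k [MOD 5] := by
  have := Bval k
  unfold B at this
  rw [← ZMod.natCast_eq_natCast_iff]
  push_cast at this ⊢
  exact this
end

section
/- For every positive integer n, 2 divides b_n' := ∑_{k=0}^n C(n,k) b_k and 5 divides b_n'' := ∑_{m=0}^n C(n,m) ∑_{k=0}^m C(m,k) b_k, where b_k = ∑_{j=0}^k C(k,j)^2 C(k+j,j). -/
open Finset

def bb (k : ℕ) : ℕ := ∑ j ∈ Finset.range (k + 1), (k.choose j) ^ 2 * (k + j).choose j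

instance : Fact (Nat.Prime 5) := ⟨by norm_num⟩

lemma term_even_s12 {k m : ℕ} (hm : 1 ≤ m) : 2 ∣ (k.choose m) ^ 2 * ((k + m).choose m) := by
  rcases le_or_gt m k with h | h
  · have hid : (k + m).choose (2 * m) * (2 * m).choose m = (k + m).choose m * k.choose m := by
      have := Nat.choose_mul (n := k + m) (k := 2 * m) (s := m) (by omega)
      have h1 : k + m - m = k := by omega
      have h2 : 2 * m - m = m := by omega
      rw [this, h1, h2]
    have h2 : 2 ∣ (2 * m).choose m := by
      obtain ⟨i, rfl⟩ : ∃ i, m = i + 1 := ⟨m - 1, by omega⟩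
      have := Nat.two_dvd_centralBinom_succ i
      rwa [Nat.centralBinom] at this
    have h3 : 2 ∣ (k + m).choose m * k.choose m := hid ▸ h2.mul_left _
    calc 2 ∣ (k + m).choose m * k.choose m := h3
      _ ∣ (k.choose m) ^ 2 * ((k + m).choose m) := ⟨k.choose m, by ring⟩
  · simp [Nat.choose_eq_zero_of_lt h]

lemma bb_mod_two (k : ℕ) : ((bb k : ℕ) : ZMod 2) = 1 := by
  unfold bb
  rw [Nat.cast_sum, Finset.sum_eq_single_of_mem 0 (by simp)]
  · simp
  · intro j _ hj
    rw [ZMod.natCast_eq_zero_iff]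
    exact term_even_s12 (by omega)

lemma lucas5_s12 (a b : ℕ) :
    ((a.choose b : ℕ) : ZMod 5) = ((a % 5).choose (b % 5) : ℕ) * ((a / 5).choose (b / 5) : ℕ) := by
  have h := (ZMod.natCast_eq_natCast_iff _ _ _).mpr
    (Choose.choose_modEq_choose_mod_mul_choose_div_nat (n := a) (k := b) (p := 5))
  rw [h, Nat.cast_mul]

lemma term5 (q r a b : ℕ) (hr : r < 5) (hb : b < 5) :
    ((((5 * q + r).choose (5 * a + b)) ^ 2 * ((5 * q + r + (5 * a + b)).choose (5 * a + b)) : ℕ) :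
        ZMod 5)
      = (((q.choose a) ^ 2 * ((q + a).choose a) : ℕ) : ZMod 5) *
        (((r.choose b) ^ 2 * ((r + b).choose b) : ℕ) : ZMod 5) := by
  push_cast
  rw [lucas5_s12 (5 * q + r) (5 * a + b)]
  have e1 : (5 * q + r) % 5 = r := by omega
  have e2 : (5 * q + r) / 5 = q := by omega
  have e3 : (5 * a + b) % 5 = b := by omega
  have e4 : (5 * a + b) / 5 = a := by omega
  rw [e1, e2, e3, e4]
  rcases lt_or_ge (r + b) 5 with h | h
  · rw [lucas5_s12 (5 * q + r + (5 * a + b)) (5 * a + b)]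
    have f1 : (5 * q + r + (5 * a + b)) % 5 = r + b := by omega
    have f2 : (5 * q + r + (5 * a + b)) / 5 = q + a := by omega
    rw [f1, f2, e3, e4, lucas5_s12 (r + b) b]
    have f3 : (r + b) % 5 = r + b := by omega
    have f4 : (r + b) / 5 = 0 := by omega
    have f5 : b / 5 = 0 := by omega
    have f6 : b % 5 = b := by omega
    rw [f3, f4, f5, f6]
    ring
  · rw [lucas5_s12 (5 * q + r + (5 * a + b)) (5 * a + b)]
    have f1 : (5 * q + r + (5 * a + b)) % 5 = r + b - 5 := by omega
    have f2 : (5 * a + b) % 5 = b := by omega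
    rw [f1, f2]
    have f3 : (r + b - 5).choose b = 0 := Nat.choose_eq_zero_of_lt (by omega)
    rw [lucas5_s12 (r + b) b]
    have f4 : (r + b) % 5 = r + b - 5 := by omega
    have f5 : b % 5 = b := by omega
    rw [f4, f5, f3]
    push_cast
    ring

lemma bb_factor (q r : ℕ) (hr : r < 5) :
    ((bb (5 * q + r) : ℕ) : ZMod 5) = (bb q : ZMod 5) * (bb r : ZMod 5) := by
  have hext : ((bb (5 * q + r) : ℕ) : ZMod 5) =
      ∑ j ∈ range (5 * (q + 1)), ((((5 * q + r).choose j) ^ 2 *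
        ((5 * q + r + j).choose j) : ℕ) : ZMod 5) := by
    unfold bb
    rw [Nat.cast_sum]
    apply Finset.sum_subset
    · intro j hj
      simp only [mem_range] at *
      omega
    · intro j _ hj
      simp only [mem_range, not_lt] at hj
      rw [Nat.choose_eq_zero_of_lt (by omega)]
      push_cast
      ring
  rw [hext]
  have hbij : ∑ j ∈ range (5 * (q + 1)), ((((5 * q + r).choose j) ^ 2 *
        ((5 * q + r + j).choose j) : ℕ) : ZMod 5)
      = ∑ p ∈ range (q + 1) ×ˢ range 5, ((((5 * q + r).choose (5 * p.1 + p.2)) ^ 2 *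
        ((5 * q + r + (5 * p.1 + p.2)).choose (5 * p.1 + p.2)) : ℕ) : ZMod 5) := by
    apply Finset.sum_nbij' (fun j => (j / 5, j % 5)) (fun p => 5 * p.1 + p.2)
    · intro j hj
      simp only [mem_range, mem_product] at *
      omega
    · intro p hp
      simp only [mem_range, mem_product] at *
      omega
    · intro j _; omega
    · intro p hp
      simp only [mem_range, mem_product] at hp
      have h1 : (5 * p.1 + p.2) / 5 = p.1 := by omega
      have h2 : (5 * p.1 + p.2) % 5 = p.2 := by omega
      rw [h1, h2]
    · intro j _
      have : 5 * (j / 5) + j % 5 = j := by omega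
      rw [this]
  rw [hbij, Finset.sum_product]
  have : ∀ p1 ∈ range (q + 1), ∀ p2 ∈ range 5,
      ((((5 * q + r).choose (5 * p1 + p2)) ^ 2 *
        ((5 * q + r + (5 * p1 + p2)).choose (5 * p1 + p2)) : ℕ) : ZMod 5)
      = (((q.choose p1) ^ 2 * ((q + p1).choose p1) : ℕ) : ZMod 5) *
        (((r.choose p2) ^ 2 * ((r + p2).choose p2) : ℕ) : ZMod 5) := by
    intro p1 _ p2 hp2
    exact term5 q r p1 p2 hr (by simpa using hp2)
  rw [Finset.sum_congr rfl (fun p1 h1 => Finset.sum_congr rfl (fun p2 h2 => this p1 h1 p2 h2))]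
  rw [← Finset.sum_mul_sum]
  congr 1
  · unfold bb; rw [Nat.cast_sum]
  · unfold bb
    rw [Nat.cast_sum]
    symm
    apply Finset.sum_subset
    · intro b hb; simp only [mem_range] at *; omega
    · intro b _ hb
      simp only [mem_range, not_lt] at hb
      rw [Nat.choose_eq_zero_of_lt (by omega)]
      push_cast; ring

lemma bb_mod_five (k : ℕ) : ((bb k : ℕ) : ZMod 5) = 3 ^ k := by
  induction k using Nat.strong_induction_on with
  | _ k ih =>
    rcases lt_or_ge k 5 with h | h
    · interval_cases k <;> simp [bb, Finset.sum_range_succ] <;> decide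
    · obtain ⟨q, r, hr5, hq1, rfl⟩ : ∃ q r, r < 5 ∧ 1 ≤ q ∧ k = 5 * q + r :=
        ⟨k / 5, k % 5, by omega, by omega, by omega⟩
      rw [bb_factor q r hr5, ih q (by omega), ih r (by omega)]
      have : (3 : ZMod 5) ^ (5 * q + r) = ((3 : ZMod 5) ^ 4) ^ q * (3 ^ q * 3 ^ r) := by
        rw [← pow_mul, ← pow_add, ← pow_add]
        congr 1
        ring
      rw [this, show ((3 : ZMod 5) ^ 4) = 1 from by decide, one_pow, one_mul]

theorem apery_b_transforms_div (n : ℕ) (hn : 1 ≤ n) :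
    (2 ∣ ∑ k ∈ Finset.range (n + 1), n.choose k *
        ∑ j ∈ Finset.range (k + 1), (k.choose j) ^ 2 * (k + j).choose j) ∧
      (5 ∣ ∑ m ∈ Finset.range (n + 1), n.choose m *
          ∑ k ∈ Finset.range (m + 1), m.choose k *
            ∑ j ∈ Finset.range (k + 1), (k.choose j) ^ 2 * (k + j).choose j) := by
  constructor
  · rw [← ZMod.natCast_eq_zero_iff]
    show ((∑ k ∈ Finset.range (n + 1), n.choose k * bb k : ℕ) : ZMod 2) = 0
    rw [Nat.cast_sum]
    have : ∀ k ∈ range (n + 1), ((n.choose k * bb k : ℕ) : ZMod 2) = ((n.choose k : ℕ) : ZMod 2) := by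
      intro k _
      rw [Nat.cast_mul, bb_mod_two, mul_one]
    rw [Finset.sum_congr rfl this, ← Nat.cast_sum, Nat.sum_range_choose]
    rw [Nat.cast_pow, show ((2 : ℕ) : ZMod 2) = 0 from by decide, zero_pow (by omega : n ≠ 0)]
  · rw [← ZMod.natCast_eq_zero_iff]
    show ((∑ m ∈ Finset.range (n + 1), n.choose m *
        ∑ k ∈ Finset.range (m + 1), m.choose k * bb k : ℕ) : ZMod 5) = 0
    rw [Nat.cast_sum]
    have hinner : ∀ m : ℕ, ((∑ k ∈ Finset.range (m + 1), m.choose k * bb k : ℕ) : ZMod 5)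
        = 4 ^ m := by
      intro m
      rw [Nat.cast_sum]
      have : ∀ k ∈ range (m + 1), ((m.choose k * bb k : ℕ) : ZMod 5)
          = (3 : ZMod 5) ^ k * 1 ^ (m - k) * (m.choose k : ℕ) := by
        intro k _
        rw [Nat.cast_mul, bb_mod_five]
        ring
      rw [Finset.sum_congr rfl this, ← add_pow (3 : ZMod 5) 1 m]
      norm_num
    have : ∀ m ∈ range (n + 1), ((n.choose m *
        ∑ k ∈ Finset.range (m + 1), m.choose k * bb k : ℕ) : ZMod 5)
        = (4 : ZMod 5) ^ m * 1 ^ (n - m) * (n.choose m : ℕ) := by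
      intro m _
      rw [Nat.cast_mul, hinner m]
      ring
    rw [Finset.sum_congr rfl this, ← add_pow (4 : ZMod 5) 1 n]
    rw [show ((4 : ZMod 5) + 1) = 0 from by decide, zero_pow (by omega : n ≠ 0)]
end

section
/- For every nonnegative integer k, the Apéry number A_k := ∑_{j=0}^k C(k,j)^2 C(k+j,j)^2 satisfies A_k ≡ 3 − 2·(−1)^k (mod 24); that is, A_k ≡ 1 (mod 24) if k is even and A_k ≡ 5 (mod 24) if k is odd. -/
open Finset

def Ap (k : ℕ) : ℕ := ∑ j ∈ Finset.range (k + 1), (k.choose j) ^ 2 * ((k + j).choose j) ^ 2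

/-- Lucas in ZMod form -/
lemma lucasZ (p : ℕ) [Fact p.Prime] (n k : ℕ) :
    ((n.choose k : ℕ) : ZMod p) =
      ((n % p).choose (k % p) : ℕ) * (((n / p).choose (k / p) : ℕ) : ZMod p) := by
  have h := Choose.choose_modEq_choose_mod_mul_choose_div (p := p) (n := n) (k := k)
  have := (ZMod.intCast_eq_intCast_iff _ _ _).mpr h
  push_cast at this ⊢
  exact_mod_cast this

lemma sum_range_mul {M : Type*} [AddCommMonoid M] (f : ℕ → M) (m n : ℕ) :
    ∑ j ∈ range (m * n), f j = ∑ u ∈ range n, ∑ v ∈ range m, f (m * u + v) := by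
  induction n with
  | zero => simp
  | succ n ih =>
      rw [Finset.sum_range_succ, ← ih, Nat.mul_succ, Finset.sum_range_add]

lemma central_double (i : ℕ) : (2 * (i + 1)).choose (i + 1) = 2 * ((2 * i + 1).choose i) := by
  have h1 : 2 * (i + 1) = (2 * i + 1) + 1 := by ring
  rw [h1, Nat.choose_succ_succ, Nat.choose_symm_half]; ring

lemma key_id {k j : ℕ} (hj : j ≤ k) :
    (k + j).choose (2 * j) * (2 * j).choose j = k.choose j * (k + j).choose j := by
  have h := Nat.choose_mul (n := k + j) (k := 2 * j) (s := j) (by omega)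
  rw [h]
  have h2 : k + j - j = k := by omega
  have h3 : 2 * j - j = j := by omega
  rw [h2, h3]; ring

lemma Ap_eq_sum (k N : ℕ) (h : k + 1 ≤ N) :
    (Ap k : ℕ) = ∑ j ∈ range N, (k.choose j) ^ 2 * ((k + j).choose j) ^ 2 := by
  rw [Ap]
  apply Finset.sum_subset (Finset.range_subset_range.mpr h)
  intro j _ hj
  rw [Finset.mem_range, not_lt] at hj
  rw [Nat.choose_eq_zero_of_lt (by omega)]
  ring

lemma choose_cast_1 (q u r v : ℕ) (hr : r < 3) (hv : v < 3) :
    (((3 * q + r).choose (3 * u + v) : ℕ) : ZMod 3) =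
      ((r.choose v : ℕ) : ZMod 3) * ((q.choose u : ℕ) : ZMod 3) := by
  have h := lucasZ 3 (3 * q + r) (3 * u + v)
  have e1 : (3 * q + r) % 3 = r := by omega
  have e2 : (3 * q + r) / 3 = q := by omega
  have e3 : (3 * u + v) % 3 = v := by omega
  have e4 : (3 * u + v) / 3 = u := by omega
  rwa [e1, e2, e3, e4] at h

lemma choose_cast_2 (q u r v : ℕ) (h : r + v < 3) :
    (((3 * q + r + (3 * u + v)).choose (3 * u + v) : ℕ) : ZMod 3) =
      (((r + v).choose v : ℕ) : ZMod 3) * (((q + u).choose u : ℕ) : ZMod 3) := by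
  have h5 : 3 * q + r + (3 * u + v) = 3 * (q + u) + (r + v) := by ring
  rw [h5]
  exact choose_cast_1 (q + u) u (r + v) v h (by omega)

lemma choose_cast_2' (q u r v : ℕ) (hr : r < 3) (hv : v < 3) (h : 3 ≤ r + v) :
    (((3 * q + r + (3 * u + v)).choose (3 * u + v) : ℕ) : ZMod 3) = 0 := by
  have hle := lucasZ 3 (3 * q + r + (3 * u + v)) (3 * u + v)
  have e1 : (3 * q + r + (3 * u + v)) % 3 = r + v - 3 := by omega
  have e2 : (3 * u + v) % 3 = v := by omega
  rw [e1, e2] at hle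
  rw [hle, Nat.choose_eq_zero_of_lt (by omega)]
  simp

lemma Ap_mod3_rec (q r : ℕ) (hr : r < 3) :
    ((Ap (3 * q + r) : ℕ) : ZMod 3) = ((Ap q : ℕ) : ZMod 3) * (-1) ^ r := by
  rw [Ap_eq_sum (3 * q + r) (3 * (q + 1)) (by omega), Nat.cast_sum,
    sum_range_mul (fun j =>
      ((((3 * q + r).choose j) ^ 2 * ((3 * q + r + j).choose j) ^ 2 : ℕ) : ZMod 3)) 3 (q + 1),
    Ap, Nat.cast_sum, Finset.sum_mul]
  apply Finset.sum_congr rfl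
  intro u _
  rw [Finset.sum_range_succ, Finset.sum_range_succ, Finset.sum_range_succ,
    Finset.sum_range_zero]
  push_cast
  rw [choose_cast_1 q u r 0 hr (by omega), choose_cast_1 q u r 1 hr (by omega),
    choose_cast_1 q u r 2 hr (by omega)]
  have h3 : (3 : ZMod 3) = 0 := by decide
  interval_cases r
  · rw [choose_cast_2 q u 0 0 (by omega), choose_cast_2 q u 0 1 (by omega),
      choose_cast_2 q u 0 2 (by omega)]
    norm_num
  · rw [choose_cast_2 q u 1 0 (by omega), choose_cast_2 q u 1 1 (by omega),
      choose_cast_2' q u 1 2 (by omega) (by omega) (by omega)]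
    norm_num
    linear_combination (2 * ((q.choose u : ℕ) : ZMod 3) ^ 2 *
      (((q + u).choose u : ℕ) : ZMod 3) ^ 2) * h3
  · rw [choose_cast_2 q u 2 0 (by omega), choose_cast_2' q u 2 1 (by omega) (by omega) (by omega),
      choose_cast_2' q u 2 2 (by omega) (by omega) (by omega)]
    norm_num

lemma Ap_mod3 (k : ℕ) : ((Ap k : ℕ) : ZMod 3) = (-1) ^ k := by
  induction k using Nat.strong_induction_on with
  | _ k ih =>
    rcases Nat.eq_zero_or_pos k with h0 | h0
    · subst h0; simp [Ap]
    · have h := Ap_mod3_rec (k / 3) (k % 3) (Nat.mod_lt _ (by norm_num))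
      have hk : 3 * (k / 3) + k % 3 = k := by omega
      rw [hk] at h
      rw [h, ih (k / 3) (by omega)]
      have hp : (-1 : ZMod 3) ^ k = (-1) ^ (k / 3) * (-1) ^ (k % 3) := by
        conv_lhs => rw [← hk]
        rw [pow_add, pow_mul]
        norm_num
      rw [hp]

def gp (k i : ℕ) : ℕ := (k + i + 1).choose (2 * i + 2) * ((2 * i + 1).choose i)

def Sp (k : ℕ) : ℕ := ∑ i ∈ range k, gp k i

lemma Sp_eq_sum (k N : ℕ) (h : k ≤ N) : Sp k = ∑ i ∈ range N, gp k i := by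
  rw [Sp]
  apply Finset.sum_subset (Finset.range_subset_range.mpr h)
  intro i _ hi
  rw [Finset.mem_range, not_lt] at hi
  rw [gp, Nat.choose_eq_zero_of_lt (by omega), zero_mul]

lemma four_sq (c : ℕ) : ((4 * c ^ 2 : ℕ) : ZMod 8) = ((4 * c : ℕ) : ZMod 8) := by
  rw [ZMod.natCast_eq_natCast_iff]
  show (4 * c ^ 2) % 8 = (4 * c) % 8
  have h1 : c ^ 2 % 2 = c % 2 := by
    rw [Nat.pow_mod]
    rcases Nat.mod_two_eq_zero_or_one c with h | h <;> simp [h]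
  calc (4 * c ^ 2) % 8 = 4 * (c ^ 2 % 2) := Nat.mul_mod_mul_left 4 (c ^ 2) 2
    _ = 4 * (c % 2) := by rw [h1]
    _ = (4 * c) % 8 := (Nat.mul_mod_mul_left 4 c 2).symm

lemma Ap_mod8_aux (k : ℕ) : ((Ap k : ℕ) : ZMod 8) = 1 + 4 * ((Sp k : ℕ) : ZMod 8) := by
  have step1 : Ap k = (∑ i ∈ range k, 4 * (gp k i) ^ 2) + 1 := by
    rw [Ap, Finset.sum_range_succ']
    congr 1
    · apply Finset.sum_congr rfl
      intro i hi
      rw [Finset.mem_range] at hi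
      have hid : k.choose (i + 1) ^ 2 * ((k + (i + 1)).choose (i + 1)) ^ 2
          = (k.choose (i + 1) * ((k + (i + 1)).choose (i + 1))) ^ 2 := by ring
      rw [hid, ← key_id (by omega), central_double]
      rw [gp]
      have e1 : 2 * (i + 1) = 2 * i + 2 := by ring
      have e2 : k + (i + 1) = k + i + 1 := by ring
      rw [e1, e2]
      ring
    · simp
  rw [step1]
  push_cast [Finset.sum_add_distrib]
  rw [add_comm]
  congr 1
  rw [Sp, Nat.cast_sum, Finset.mul_sum]
  apply Finset.sum_congr rfl
  intro i _
  have := four_sq (gp k i)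
  push_cast at this
  rw [this]

lemma castA (k u : ℕ) : (((k + 2 * u + 2).choose (4 * u + 4) : ℕ) : ZMod 2) =
    (((k / 2 + u + 1).choose (2 * u + 2) : ℕ) : ZMod 2) := by
  have h := lucasZ 2 (k + 2 * u + 2) (4 * u + 4)
  have e1 : (k + 2 * u + 2) % 2 = k % 2 := by omega
  have e2 : (k + 2 * u + 2) / 2 = k / 2 + u + 1 := by omega
  have e3 : (4 * u + 4) % 2 = 0 := by omega
  have e4 : (4 * u + 4) / 2 = 2 * u + 2 := by omega
  rw [e1, e2, e3, e4] at h
  rw [h, Nat.choose_zero_right]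
  simp

lemma castB (u : ℕ) : (((4 * u + 3).choose (2 * u + 1) : ℕ) : ZMod 2) =
    (((2 * u + 1).choose u : ℕ) : ZMod 2) := by
  have h := lucasZ 2 (4 * u + 3) (2 * u + 1)
  have e1 : (4 * u + 3) % 2 = 1 := by omega
  have e2 : (4 * u + 3) / 2 = 2 * u + 1 := by omega
  have e3 : (2 * u + 1) % 2 = 1 := by omega
  have e4 : (2 * u + 1) / 2 = u := by omega
  rw [e1, e2, e3, e4] at h
  rw [h, Nat.choose_self]
  simp

lemma castC (w : ℕ) : (((4 * (w + 1) + 1).choose (2 * (w + 1)) : ℕ) : ZMod 2) = 0 := by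
  have h := lucasZ 2 (4 * (w + 1) + 1) (2 * (w + 1))
  have e1 : (4 * (w + 1) + 1) % 2 = 1 := by omega
  have e2 : (4 * (w + 1) + 1) / 2 = 2 * (w + 1) := by omega
  have e3 : (2 * (w + 1)) % 2 = 0 := by omega
  have e4 : (2 * (w + 1)) / 2 = w + 1 := by omega
  rw [e1, e2, e3, e4] at h
  rw [h, Nat.choose_zero_right, central_double]
  push_cast
  have h2 : (2 : ZMod 2) = 0 := by decide
  rw [h2]
  ring

lemma castD (k : ℕ) : (((k + 1).choose 2 : ℕ) : ZMod 2) = (((k + 1) / 2 : ℕ) : ZMod 2) := by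
  have h := lucasZ 2 (k + 1) 2
  have e3 : 2 % 2 = 0 := by omega
  have e4 : 2 / 2 = 1 := by omega
  rw [e3, e4] at h
  rw [h, Nat.choose_zero_right, Nat.choose_one_right]
  simp

lemma Sp_rec (k : ℕ) : ((Sp k : ℕ) : ZMod 2) =
    (((k + 1) / 2 : ℕ) : ZMod 2) + ((Sp (k / 2) : ℕ) : ZMod 2) := by
  rw [Sp_eq_sum k (2 * (k + 1)) (by omega), Nat.cast_sum,
    sum_range_mul (fun i => ((gp k i : ℕ) : ZMod 2)) 2 (k + 1)]
  have inner : ∀ u, ∑ v ∈ range 2, ((gp k (2 * u + v) : ℕ) : ZMod 2)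
      = ((gp k (2 * u) : ℕ) : ZMod 2) + ((gp (k / 2) u : ℕ) : ZMod 2) := by
    intro u
    rw [Finset.sum_range_succ, Finset.sum_range_succ, Finset.sum_range_zero, zero_add]
    congr 1
    rw [gp, gp]
    have e1 : k + (2 * u + 1) + 1 = k + 2 * u + 2 := by ring
    have e2 : 2 * (2 * u + 1) + 2 = 4 * u + 4 := by ring
    have e3 : 2 * (2 * u + 1) + 1 = 4 * u + 3 := by ring
    rw [e1, e2, e3]
    push_cast
    rw [castA, castB]
  rw [Finset.sum_congr rfl (fun u _ => inner u), Finset.sum_add_distrib]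
  congr 1
  · -- even part: only u = 0 survives
    rw [Finset.sum_range_succ']
    have hz : ∀ w ∈ range k, ((gp k (2 * (w + 1)) : ℕ) : ZMod 2) = 0 := by
      intro w _
      rw [gp]
      push_cast
      rw [show 2 * (2 * (w + 1)) + 1 = 4 * (w + 1) + 1 from by ring, castC, mul_zero]
    rw [Finset.sum_congr rfl hz, Finset.sum_const_zero, zero_add]
    have hg0 : gp k (2 * 0) = (k + 1).choose 2 := by
      rw [gp]
      norm_num
    rw [hg0, castD]
  · rw [← Nat.cast_sum, ← Sp_eq_sum (k / 2) (k + 1) (by omega)]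

lemma Sp_mod2 (k : ℕ) : ((Sp k : ℕ) : ZMod 2) = (k : ZMod 2) := by
  induction k using Nat.strong_induction_on with
  | _ k ih =>
    rcases Nat.eq_zero_or_pos k with h0 | h0
    · subst h0; simp [Sp]
    · rw [Sp_rec, ih (k / 2) (by omega), ← Nat.cast_add,
        show (k + 1) / 2 + k / 2 = k from by omega]

lemma Ap_mod8 (k : ℕ) : ((Ap k : ℕ) : ZMod 8) = 1 + 4 * (k : ZMod 8) := by
  rw [Ap_mod8_aux]
  congr 1
  have h2 : Sp k ≡ k [MOD 2] := (ZMod.natCast_eq_natCast_iff _ _ _).mp (Sp_mod2 k)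
  have h8 : 4 * Sp k ≡ 4 * k [MOD 8] := Nat.ModEq.mul_left' 4 h2
  have := (ZMod.natCast_eq_natCast_iff _ _ _).mpr h8
  push_cast at this
  exact this

theorem apery_A_mod_24 (k : ℕ) :
    ((∑ j ∈ Finset.range (k + 1), (k.choose j) ^ 2 * ((k + j).choose j) ^ 2 : ℕ) : ℤ) ≡
      3 - 2 * (-1) ^ k [ZMOD 24] := by
  show ((Ap k : ℕ) : ℤ) ≡ 3 - 2 * (-1) ^ k [ZMOD 24]
  have h24 : (24 : ℤ) = 8 * 3 := by norm_num
  rw [h24]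
  apply (Int.modEq_and_modEq_iff_modEq_mul (by decide)).mp
  constructor
  · -- mod 8
    have h := Ap_mod8 k
    apply (ZMod.intCast_eq_intCast_iff (c := 8) _ _).mp
    push_cast
    rw [h]
    have h8 : (8 : ZMod 8) = 0 := by decide
    rcases Nat.even_or_odd k with ⟨m, hm⟩ | ⟨m, hm⟩
    · subst hm
      rw [show m + m = 2 * m from by ring]
      push_cast
      rw [pow_mul]
      norm_num
      linear_combination (m : ZMod 8) * h8
    · subst hm
      push_cast
      rw [pow_add, pow_mul]
      norm_num
      linear_combination (m : ZMod 8) * h8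
  · -- mod 3
    have h := Ap_mod3 k
    apply (ZMod.intCast_eq_intCast_iff (c := 3) _ _).mp
    push_cast
    rw [h]
    have h3 : (3 : ZMod 3) = 0 := by decide
    linear_combination ((-1 : ZMod 3) ^ k - 1) * h3
end

section
/- For every integer n ≥ 3, the binomial transform A_n' := ∑_{k=0}^n C(n,k) A_k of the Apéry numbers A_k = ∑_{j=0}^k C(k,j)^2 C(k+j,j)^2 is divisible by 24. -/
open Finset

namespace AperyDiv24

instance : Fact (Nat.Prime 2) := ⟨Nat.prime_two⟩
instance : Fact (Nat.Prime 3) := ⟨Nat.prime_three⟩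

def Ap (k : ℕ) : ℕ := ∑ j ∈ Finset.range (k+1), (k.choose j)^2 * ((k+j).choose j)^2

def eterm (k i : ℕ) : ℕ := (2*i+1).choose i * (k+i+1).choose (2*i+2)

lemma choose_trinom {k j : ℕ} (h : j ≤ k) :
    (2*j).choose j * (k+j).choose (2*j) = k.choose j * (k+j).choose j := by
  have h1 := Nat.choose_mul (n := k+j) (k := 2*j) (s := j) (by omega)
  have h2 : k + j - j = k := by omega
  have h3 : 2*j - j = j := by omega
  rw [h2, h3] at h1
  rw [mul_comm ((2*j).choose j), h1, mul_comm]

lemma central_split (i : ℕ) : (2*(i+1)).choose (i+1) = 2 * ((2*i+1).choose i) := by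
  have h : 2*(i+1) = (2*i+1) + 1 := by ring
  rw [h, Nat.choose_succ_succ, Nat.choose_symm_half]
  omega

lemma Ap_eq (k : ℕ) : Ap k = 1 + 4 * ∑ i ∈ range k, (eterm k i)^2 := by
  unfold Ap
  rw [Finset.sum_range_succ']
  simp only [Nat.choose_zero_right, Nat.add_zero, one_pow, one_mul]
  have hc : ∀ i ∈ range k,
      (k.choose (i+1))^2 * ((k+(i+1)).choose (i+1))^2 = 4 * (eterm k i)^2 := by
    intro i hi
    have hik : i + 1 ≤ k := Finset.mem_range.mp hi
    rw [← mul_pow, ← choose_trinom hik, central_split i, eterm]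
    have e1 : k + (i+1) = k + i + 1 := by omega
    have e2 : 2*(i+1) = 2*i+2 := by omega
    rw [e1, e2]
    ring
  rw [Finset.sum_congr rfl hc, ← Finset.mul_sum]
  omega

lemma lucas_step (p : ℕ) [Fact p.Prime] (n k : ℕ) :
    ((n.choose k : ZMod p)) = ((n % p).choose (k % p) : ℕ) * (((n / p).choose (k / p) : ℕ)) := by
  have h := Choose.choose_modEq_choose_mod_mul_choose_div_nat (p := p) (n := n) (k := k)
  have := (ZMod.natCast_eq_natCast_iff _ _ _).mpr h
  rw [this]; push_cast; ring

lemma choose_pow2_mod2 : ∀ (b m : ℕ), ((m.choose (2^b) : ZMod 2)) = ((m / 2^b : ℕ) : ZMod 2) := by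
  intro b
  induction b with
  | zero => intro m; simp
  | succ b ih =>
    intro m
    rw [lucas_step 2 m (2^(b+1))]
    have h1 : 2^(b+1) % 2 = 0 := by
      simp [Nat.pow_succ, Nat.mul_mod_left]
    have h2 : 2^(b+1) / 2 = 2^b := by
      rw [Nat.pow_succ, Nat.mul_div_cancel]; norm_num
    rw [h1, h2, Nat.choose_zero_right, Nat.cast_one, one_mul, ih]
    have : m / 2 / 2^b = m / 2^(b+1) := by
      rw [Nat.div_div_eq_div_mul, pow_succ']
    rw [this]

lemma div_pow_succ_mod2 (k a : ℕ) :
    (((k + 2^a) / 2^(a+1) : ℕ) : ZMod 2)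
      = ((k / 2^a : ℕ) : ZMod 2) + ((k / 2^(a+1) : ℕ) : ZMod 2) := by
  rw [← Nat.cast_add, ZMod.natCast_eq_natCast_iff]
  have h1 : k / 2^(a+1) = k / 2^a / 2 := by
    rw [Nat.div_div_eq_div_mul, pow_succ]
  have h2 : (k + 2^a) / 2^(a+1) = (k / 2^a + 1) / 2 := by
    have : (k + 2^a) / 2^a = k / 2^a + 1 := by
      rw [Nat.add_div_right _ (Nat.pow_pos (by norm_num))]
    rw [show (2:ℕ)^(a+1) = 2^a * 2 from pow_succ 2 a, ← Nat.div_div_eq_div_mul, this]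
  rw [h1, h2]
  unfold Nat.ModEq
  have key : ∀ q : ℕ, (q+1)/2 % 2 = (q + q/2) % 2 := by
    intro q
    obtain ⟨j, b, c, hb, hc, rfl⟩ : ∃ j b c, b < 2 ∧ c < 2 ∧ q = 4*j + 2*c + b :=
      ⟨q/4, q%2, (q/2)%2, by omega, by omega, by omega⟩
    interval_cases b <;> interval_cases c <;> omega
  exact key (k / 2^a)

lemma telescope2 (f : ℕ → ZMod 2) : ∀ M, ∑ a ∈ range M, (f a + f (a+1)) = f 0 + f M := by
  have hx : ∀ x : ZMod 2, x + x = 0 := by decide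
  intro M
  induction M with
  | zero => simp [hx]
  | succ M ih =>
    rw [Finset.sum_range_succ, ih]
    ring_nf
    rw [show f M * 2 = 0 from by rw [mul_two, hx], add_zero]

lemma odd_not_pow {x : ℕ} (hodd : x % 2 = 1) (hx : 3 ≤ x) : x ≠ 2^(Nat.log 2 x) := by
  intro h
  rcases Nat.eq_zero_or_pos (Nat.log 2 x) with h0 | h0
  · rw [h0] at h; omega
  · have : (2:ℕ) ∣ 2^(Nat.log 2 x) := dvd_pow_self 2 (by omega)
    omega

lemma double_pow_iff {x : ℕ} (hx : x ≠ 0) :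
    (2*x = 2^(Nat.log 2 (2*x))) ↔ (x = 2^(Nat.log 2 x)) := by
  have hl : Nat.log 2 (2*x) = Nat.log 2 x + 1 := by
    rw [mul_comm]; exact Nat.log_mul_base (by norm_num) hx
  rw [hl, pow_succ]
  omega

lemma central_mod2 : ∀ m : ℕ, ((m.choose (m/2) : ZMod 2))
    = if m + 1 = 2^(Nat.log 2 (m+1)) then 1 else 0 := by
  intro m
  induction m using Nat.strong_induction_on with
  | _ m ih =>
    rcases Nat.even_or_odd' m with ⟨s, rfl | rfl⟩
    · rcases Nat.eq_zero_or_pos s with rfl | hs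
      · norm_num
      · have hdiv : (2*s)/2 = s := by omega
        rw [hdiv, lucas_step 2]
        have h1 : (2*s) % 2 = 0 := by omega
        have h2 : (2*s) / 2 = s := by omega
        rw [h1, h2]
        have hrhs : ¬ (2*s + 1 = 2^(Nat.log 2 (2*s+1))) := by
          exact odd_not_pow (by omega) (by omega)
        rw [if_neg hrhs]
        rcases Nat.even_or_odd s with he | ho
        · have hs1 : s % 2 = 0 := Nat.even_iff.mp he
          rw [hs1, Nat.choose_zero_right, Nat.cast_one, one_mul, ih s (by omega)]
          have : ¬ (s + 1 = 2^(Nat.log 2 (s+1))) := by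
            refine odd_not_pow (by omega) (by omega)
          rw [if_neg this]
        · have hs1 : s % 2 = 1 := Nat.odd_iff.mp ho
          rw [hs1]
          norm_num
    · have hdiv : (2*s+1)/2 = s := by omega
      rw [hdiv, lucas_step 2]
      have h1 : (2*s+1) % 2 = 1 := by omega
      have h2 : (2*s+1) / 2 = s := by omega
      rw [h1, h2]
      have hc1 : (Nat.choose 1 (s % 2)) = 1 := by
        have : s % 2 = 0 ∨ s % 2 = 1 := by omega
        rcases this with h | h <;> rw [h] <;> rfl
      rw [hc1, Nat.cast_one, one_mul, ih s (by omega)]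
      have hiff : (2*s+1 + 1 = 2^(Nat.log 2 (2*s+1+1))) ↔ (s + 1 = 2^(Nat.log 2 (s+1))) := by
        have := double_pow_iff (x := s+1) (by omega)
        rw [show 2*(s+1) = 2*s+1+1 by ring] at this
        exact this
      by_cases hcond : s + 1 = 2^(Nat.log 2 (s+1))
      · rw [if_pos hcond, if_pos (hiff.mpr hcond)]
      · rw [if_neg hcond, if_neg (fun h => hcond (hiff.mp h))]

lemma eterm_cast2 (k i : ℕ) :
    ((eterm k i : ℕ) : ZMod 2)
      = if i + 1 = 2^(Nat.log 2 (i+1)) then (((k+i+1).choose (2*i+2) : ℕ) : ZMod 2) else 0 := by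
  unfold eterm
  push_cast
  have h := central_mod2 (2*i+1)
  have hd : (2*i+1)/2 = i := by omega
  rw [hd] at h
  have hiff := double_pow_iff (x := i+1) (by omega)
  rw [show 2*(i+1) = 2*i+1+1 by ring] at hiff
  rw [h]
  by_cases hc : i+1 = 2^(Nat.log 2 (i+1))
  · rw [if_pos hc, if_pos (hiff.mpr hc), one_mul]
  · rw [if_neg hc, if_neg (fun hh => hc (hiff.mp hh)), zero_mul]

lemma esum_mod2 (k : ℕ) : ((∑ i ∈ range k, eterm k i : ℕ) : ZMod 2) = (k : ZMod 2) := by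
  rcases Nat.eq_zero_or_pos k with rfl | hk
  · simp
  rw [Nat.cast_sum]
  rw [Finset.sum_congr rfl (fun i _ => eterm_cast2 k i), ← Finset.sum_filter]
  set M := Nat.log 2 k + 1 with hM
  have hbij :
      ∑ i ∈ (range k).filter (fun i => i + 1 = 2^(Nat.log 2 (i+1))),
          (((k+i+1).choose (2*i+2) : ℕ) : ZMod 2)
        = ∑ a ∈ range M, (((k + 2^a).choose (2^(a+1)) : ℕ) : ZMod 2) := by
    refine Finset.sum_nbij' (fun i => Nat.log 2 (i+1)) (fun a => 2^a - 1) ?_ ?_ ?_ ?_ ?_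
    · intro i hi
      rw [Finset.mem_filter, Finset.mem_range] at hi
      rw [Finset.mem_range, hM]
      have h2 : 2^(Nat.log 2 (i+1)) ≤ k := by omega
      have := (Nat.le_log_iff_pow_le (by norm_num) (by omega)).mpr h2
      omega
    · intro a ha
      rw [Finset.mem_range, hM] at ha
      have hle : 2^a ≤ k := by
        calc 2^a ≤ 2^(Nat.log 2 k) := Nat.pow_le_pow_right (by norm_num) (by omega)
        _ ≤ k := Nat.pow_log_le_self 2 (by omega)
      have hpos : 0 < 2^a := Nat.pow_pos (by norm_num)
      rw [Finset.mem_filter, Finset.mem_range]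
      constructor
      · omega
      · rw [show 2^a - 1 + 1 = 2^a by omega, Nat.log_pow (by norm_num)]
    · intro i hi
      rw [Finset.mem_filter] at hi
      omega
    · intro a ha
      show Nat.log 2 (2^a - 1 + 1) = a
      have hpos : 0 < 2^a := Nat.pow_pos (by norm_num)
      rw [show 2^a - 1 + 1 = 2^a by omega, Nat.log_pow (by norm_num)]
    · intro i hi
      rw [Finset.mem_filter] at hi
      have hpow : i + 1 = 2^(Nat.log 2 (i+1)) := hi.2
      have e1 : k + i + 1 = k + 2^(Nat.log 2 (i+1)) := by omega
      have e2 : 2*i+2 = 2^(Nat.log 2 (i+1)+1) := by rw [pow_succ, ← hpow]; ring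
      rw [e1, e2]
  rw [hbij]
  have hterm : ∀ a, (((k + 2^a).choose (2^(a+1)) : ℕ) : ZMod 2)
      = ((k / 2^a : ℕ) : ZMod 2) + ((k / 2^(a+1) : ℕ) : ZMod 2) := by
    intro a
    rw [choose_pow2_mod2, div_pow_succ_mod2]
  rw [Finset.sum_congr rfl (fun a _ => hterm a),
    telescope2 (fun x => ((k / 2^x : ℕ) : ZMod 2)) M]
  have h0 : k / 2^0 = k := by simp
  have hMz : k / 2^M = 0 := Nat.div_eq_of_lt (Nat.lt_pow_succ_log_self (by norm_num) k)
  simp only [h0, hMz, Nat.cast_zero, add_zero]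

lemma Ap_mod8 (k : ℕ) : ((Ap k : ℕ) : ZMod 8) = 1 + 4 * (k : ZMod 8) := by
  rw [Ap_eq]
  push_cast
  have h1 : ∀ x : ZMod 8, 4 * x^2 = 4 * x := by decide
  have : (4 : ZMod 8) * ∑ i ∈ range k, ((eterm k i : ℕ) : ZMod 8)^2
      = 4 * ∑ i ∈ range k, ((eterm k i : ℕ) : ZMod 8) := by
    rw [Finset.mul_sum, Finset.mul_sum]
    exact Finset.sum_congr rfl (fun i _ => h1 _)
  rw [this, ← Nat.cast_sum]
  have hpar : (∑ i ∈ range k, eterm k i) % 2 = k % 2 := by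
    have := esum_mod2 k
    rwa [ZMod.natCast_eq_natCast_iff, Nat.ModEq] at this
  have hmod : (4 * ∑ i ∈ range k, eterm k i) % 8 = (4 * k) % 8 := by omega
  have : ((4 * ∑ i ∈ range k, eterm k i : ℕ) : ZMod 8) = ((4 * k : ℕ) : ZMod 8) := by
    rw [ZMod.natCast_eq_natCast_iff]; exact hmod
  rw [show ((4:ZMod 8)) * ((∑ x ∈ range k, eterm k x : ℕ) : ZMod 8)
      = ((4 * ∑ x ∈ range k, eterm k x : ℕ) : ZMod 8) by push_cast; ring, this]
  push_cast
  ring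

lemma lucasN (a u r v : ℕ) (hr : r < 3) (hv : v < 3) :
    (((3*a+r).choose (3*u+v) : ℕ) : ZMod 3)
      = ((a.choose u : ℕ) : ZMod 3) * ((r.choose v : ℕ) : ZMod 3) := by
  rw [lucas_step 3]
  have e1 : (3*a+r) % 3 = r := by omega
  have e2 : (3*a+r) / 3 = a := by omega
  have e3 : (3*u+v) % 3 = v := by omega
  have e4 : (3*u+v) / 3 = u := by omega
  rw [e1, e2, e3, e4, mul_comm]

lemma lucas2 (a u r v : ℕ) (hr : r < 3) (hv : v < 3) :
    ((((3*a+r)+(3*u+v)).choose (3*u+v) : ℕ) : ZMod 3)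
      = (((a+u).choose u : ℕ) : ZMod 3) * (((r+v).choose v : ℕ) : ZMod 3) := by
  by_cases hc : r + v < 3
  · rw [show (3*a+r)+(3*u+v) = 3*(a+u)+(r+v) by ring]
    exact lucasN (a+u) u (r+v) v hc hv
  · have h1 : (3*a+r)+(3*u+v) = 3*(a+u+1)+(r+v-3) := by omega
    rw [h1, lucasN (a+u+1) u (r+v-3) v (by omega) hv]
    have hz : (r+v-3).choose v = 0 := Nat.choose_eq_zero_of_lt (by omega)
    have hz2 : ((r+v).choose v : ZMod 3) = 0 := by
      rw [lucas_step 3 (r+v) v]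
      have f1 : (r+v) % 3 = r+v-3 := by omega
      have f2 : (r+v) / 3 = 1 := by omega
      have f3 : v % 3 = v := by omega
      have f4 : v / 3 = 0 := by omega
      rw [f1, f2, f3, f4, hz]
      simp
    rw [hz2, hz]
    simp

lemma Ap_mul3 (a r : ℕ) (hr : r < 3) :
    ((Ap (3*a+r) : ℕ) : ZMod 3) = ((Ap a : ℕ) : ZMod 3) * ((Ap r : ℕ) : ZMod 3) := by
  have key : ∀ m : ℕ, ((Ap m : ℕ) : ZMod 3)
      = ∑ j ∈ range (m+1), ((m.choose j : ℕ) : ZMod 3)^2 * (((m+j).choose j : ℕ) : ZMod 3)^2 := by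
    intro m
    rw [Ap, Nat.cast_sum]
    exact Finset.sum_congr rfl (fun j _ => by push_cast; ring)
  rw [key]
  have hext : ∑ j ∈ range (3*a+r+1),
        (((3*a+r).choose j : ℕ) : ZMod 3)^2 * (((3*a+r+j).choose j : ℕ) : ZMod 3)^2
      = ∑ j ∈ range (3*(a+1)),
        (((3*a+r).choose j : ℕ) : ZMod 3)^2 * (((3*a+r+j).choose j : ℕ) : ZMod 3)^2 := by
    apply Finset.sum_subset (Finset.range_subset_range.mpr (by omega))
    intro j hj hnj
    rw [Finset.mem_range] at hj hnj
    have : (3*a+r).choose j = 0 := Nat.choose_eq_zero_of_lt (by omega)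
    rw [this]
    push_cast
    ring
  rw [hext]
  have hreix : ∑ j ∈ range (3*(a+1)),
        (((3*a+r).choose j : ℕ) : ZMod 3)^2 * (((3*a+r+j).choose j : ℕ) : ZMod 3)^2
      = ∑ p ∈ (range (a+1)) ×ˢ (range 3),
        ((((a.choose p.1 : ℕ) : ZMod 3))^2 * (((a+p.1).choose p.1 : ℕ) : ZMod 3)^2)
          * ((((r.choose p.2 : ℕ) : ZMod 3))^2 * (((r+p.2).choose p.2 : ℕ) : ZMod 3)^2) := by
    refine Finset.sum_nbij' (fun j => (j/3, j%3)) (fun p => 3*p.1+p.2) ?_ ?_ ?_ ?_ ?_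
    · intro j hj
      rw [Finset.mem_range] at hj
      rw [Finset.mem_product, Finset.mem_range, Finset.mem_range]
      constructor <;> [skip; skip] <;> dsimp only <;> omega
    · intro p hp
      rw [Finset.mem_product, Finset.mem_range, Finset.mem_range] at hp
      show 3*p.1+p.2 ∈ range (3*(a+1))
      rw [Finset.mem_range]
      omega
    · intro j hj
      dsimp only
      omega
    · intro p hp
      rw [Finset.mem_product, Finset.mem_range, Finset.mem_range] at hp
      show ((3*p.1+p.2)/3, (3*p.1+p.2)%3) = p
      rw [Prod.ext_iff]
      constructor <;> dsimp only <;> omega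
    · intro j hj
      rw [Finset.mem_range] at hj
      obtain ⟨u, v, hv, rfl⟩ : ∃ u v, v < 3 ∧ j = 3*u+v := ⟨j/3, j%3, by omega, by omega⟩
      dsimp only
      have eu : (3*u+v)/3 = u := by omega
      have ev : (3*u+v)%3 = v := by omega
      rw [eu, ev, lucasN a u r v hr hv, lucas2 a u r v hr hv]
      ring
  rw [hreix, Finset.sum_product]
  have hms : ∑ x ∈ range (a+1), ∑ y ∈ range 3,
        (((a.choose x : ℕ) : ZMod 3)^2 * (((a+x).choose x : ℕ) : ZMod 3)^2)
          * (((r.choose y : ℕ) : ZMod 3)^2 * (((r+y).choose y : ℕ) : ZMod 3)^2)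
      = (∑ x ∈ range (a+1), ((a.choose x : ℕ) : ZMod 3)^2 * (((a+x).choose x : ℕ) : ZMod 3)^2)
        * (∑ y ∈ range 3, ((r.choose y : ℕ) : ZMod 3)^2 * (((r+y).choose y : ℕ) : ZMod 3)^2) := by
    rw [Finset.sum_mul_sum]
  rw [hms]
  congr 1
  · rw [key]
  · rw [key]
    symm
    apply Finset.sum_subset (Finset.range_subset_range.mpr (by omega))
    intro v hv hnv
    rw [Finset.mem_range] at hv hnv
    have : r.choose v = 0 := Nat.choose_eq_zero_of_lt (by omega)
    rw [this]
    push_cast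
    ring

lemma Ap0 : Ap 0 = 1 := by simp [Ap, Finset.sum_range_succ, Nat.choose]
lemma Ap1 : Ap 1 = 5 := by simp [Ap, Finset.sum_range_succ, Nat.choose]
lemma Ap2 : Ap 2 = 73 := by simp [Ap, Finset.sum_range_succ, Nat.choose]

lemma Ap_mod3 : ∀ k : ℕ, ((Ap k : ℕ) : ZMod 3) = (-1)^k := by
  intro k
  induction k using Nat.strong_induction_on with
  | _ k ih =>
    rcases lt_or_ge k 3 with hk | hk
    · interval_cases k
      · rw [Ap0]; decide
      · rw [Ap1]; decide
      · rw [Ap2]; decide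
    · obtain ⟨a, r, hr, rfl⟩ : ∃ a r, r < 3 ∧ k = 3*a+r := ⟨k/3, k%3, by omega, by omega⟩
      have ha : 0 < a := by omega
      rw [Ap_mul3 a r hr, ih a (by omega), ih r (by omega)]
      rw [← pow_add]
      have : (-1 : ZMod 3)^(3*a+r) = (-1)^(a+r) := by
        rw [pow_add, pow_add, pow_mul]
        norm_num
      rw [this]

lemma Ap_congr24 (k : ℕ) : (24:ℤ) ∣ (Ap k : ℤ) - (3 - 2*(-1)^k) := by
  -- mod 8
  have h8 : (8:ℤ) ∣ (Ap k : ℤ) - (1 + 4*(k:ℤ)) := by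
    have h := Ap_mod8 k
    have h' : ((Ap k : ℕ) : ZMod 8) = ((1 + 4*k : ℕ) : ZMod 8) := by
      rw [h]; push_cast; ring
    rw [ZMod.natCast_eq_natCast_iff] at h'
    have := h'.dvd
    omega
  -- mod 3
  have h3 : (3:ℤ) ∣ (Ap k : ℤ) - (-1)^k := by
    have h := Ap_mod3 k
    have h' : (((Ap k : ℤ)) : ZMod 3) = (((-1:ℤ)^k : ℤ) : ZMod 3) := by
      push_cast
      rw [h]
    rw [ZMod.intCast_eq_intCast_iff] at h'
    exact Int.ModEq.dvd h'.symm
  rcases Nat.even_or_odd k with he | ho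
  · obtain ⟨m, rfl⟩ := he
    rw [Even.neg_one_pow ⟨m, rfl⟩] at h3 ⊢
    push_cast at h8 h3 ⊢
    omega
  · obtain ⟨m, rfl⟩ := ho
    rw [Odd.neg_one_pow ⟨m, rfl⟩] at h3 ⊢
    push_cast at h8 h3 ⊢
    omega

end AperyDiv24

theorem apery_A_binomial_transform_div_24 (n : ℕ) (hn : 3 ≤ n) :
    24 ∣ ∑ k ∈ Finset.range (n + 1), n.choose k *
        ∑ j ∈ Finset.range (k + 1), (k.choose j) ^ 2 * ((k + j).choose j) ^ 2 := by
  show 24 ∣ ∑ k ∈ Finset.range (n + 1), n.choose k * AperyDiv24.Ap k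
  have key : (24:ℤ) ∣ ((∑ k ∈ Finset.range (n + 1), n.choose k * AperyDiv24.Ap k : ℕ) : ℤ) := by
    have hcast : ((∑ k ∈ Finset.range (n + 1), n.choose k * AperyDiv24.Ap k : ℕ) : ℤ)
        = ∑ k ∈ Finset.range (n + 1), (n.choose k : ℤ) * (AperyDiv24.Ap k : ℤ) := by
      push_cast; rfl
    rw [hcast]
    have hsplit : ∑ k ∈ Finset.range (n + 1), (n.choose k : ℤ) * (AperyDiv24.Ap k : ℤ)
        = (∑ k ∈ Finset.range (n + 1),
            (n.choose k : ℤ) * ((AperyDiv24.Ap k : ℤ) - (3 - 2*(-1)^k)))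
          + ∑ k ∈ Finset.range (n + 1), (n.choose k : ℤ) * (3 - 2*(-1)^k) := by
      rw [← Finset.sum_add_distrib]
      exact Finset.sum_congr rfl (fun k _ => by ring)
    rw [hsplit]
    apply dvd_add
    · exact Finset.dvd_sum (fun k _ => Dvd.dvd.mul_left (AperyDiv24.Ap_congr24 k) _)
    · have hsum2 : ∑ k ∈ Finset.range (n + 1), (n.choose k : ℤ) * (3 - 2*(-1)^k)
          = 3 * (∑ k ∈ Finset.range (n + 1), (n.choose k : ℤ))
            - 2 * (∑ k ∈ Finset.range (n + 1), (-1:ℤ)^k * (n.choose k : ℤ)) := by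
        rw [Finset.mul_sum, Finset.mul_sum, ← Finset.sum_sub_distrib]
        exact Finset.sum_congr rfl (fun k _ => by ring)
      rw [hsum2]
      have hc : (∑ k ∈ Finset.range (n + 1), (n.choose k : ℤ)) = 2^n := by
        have := Nat.sum_range_choose n
        have h2 : ((∑ m ∈ Finset.range (n+1), n.choose m : ℕ) : ℤ) = ((2^n : ℕ) : ℤ) := by
          rw [this]
        push_cast at h2
        exact h2
      have halt : (∑ k ∈ Finset.range (n + 1), (-1:ℤ)^k * (n.choose k : ℤ)) = 0 :=
        Int.alternating_sum_range_choose_of_ne (by omega)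
      rw [hc, halt, mul_zero, sub_zero]
      have : (3:ℤ) * 2^n = 24 * 2^(n-3) := by
        rw [show n = 3 + (n-3) by omega, pow_add]
        ring_nf
        rw [show 3 + (n-3) - 3 = n - 3 by omega]
      rw [this]
      exact Dvd.intro _ rfl
  exact_mod_cast key
end

section
/- Let k be a positive integer and (x_i)_{i≥0} an integer sequence with x_0 = 1 such that 2k divides x_i for all i ≥ 1, and 4k divides x_i (for i ≥ 1) if and only if i is not a power of two. Then for every n ≥ 0, the Hankel determinant det[x_{i+j}]_{0≤i,j≤n} divided by (2k)^n is an odd integer. -/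
open scoped Classical

/-- `a` is a power of two. -/
def isPow2 (a : ℕ) : Prop := ∃ t : ℕ, a = 2 ^ t

lemma pow_between {e t : ℕ} (h1 : 2 ^ e < 2 ^ t) (h2 : 2 ^ t < 2 ^ (e + 2)) :
    2 ^ t = 2 ^ (e + 1) := by
  have ht1 : e < t := (Nat.pow_lt_pow_iff_right (by norm_num)).mp h1
  have ht2 : t < e + 2 := (Nat.pow_lt_pow_iff_right (by norm_num)).mp h2
  have : t = e + 1 := by omega
  rw [this]

/-- A permutation is "good" if `i + σ i + 2` is always a power of two
(1-indexed: value sums are powers of two). -/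
def HGood (n : ℕ) (σ : Equiv.Perm (Fin n)) : Prop :=
  ∀ i : Fin n, isPow2 ((σ i).1 + i.1 + 2)

noncomputable def GI (n : ℕ) : Finset (Equiv.Perm (Fin n)) :=
  Finset.univ.filter (fun σ => σ⁻¹ = σ ∧ HGood n σ)

lemma pow_succ_fact {e : ℕ} : (2:ℕ) ^ (e+1) = 2 * 2 ^ e := by ring
lemma pow_succ_fact2 {e : ℕ} : (2:ℕ) ^ (e+2) = 2 * 2 ^ (e+1) := by ring

lemma sigma_sigma {n : ℕ} {σ : Equiv.Perm (Fin n)} (hinv : σ⁻¹ = σ) : ∀ a, σ (σ a) = a := by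
  intro a
  nth_rewrite 1 [← hinv]
  exact Equiv.symm_apply_apply σ a

section claims

variable {n : ℕ} {e : ℕ} (hh1 : 2 ^ e ≤ n) (hh2 : n < 2 ^ (e + 1))
variable {σ : Equiv.Perm (Fin n)}

include hh1 hh2

lemma claimA (hσ : HGood n σ) (i : Fin n) (hi : 2 ^ e ≤ i.1) :
    (σ i).1 + i.1 + 2 = 2 ^ (e + 1) := by
  obtain ⟨t, ht⟩ := hσ i
  have hb1 := (σ i).2
  have hb2 := i.2
  have hf2 : (2:ℕ) ^ (e+2) = 2 * 2 ^ (e+1) := pow_succ_fact2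
  have hub : (σ i).1 + i.1 + 2 < 2 ^ (e + 2) := by omega
  have hlb : 2 ^ e < (σ i).1 + i.1 + 2 := by omega
  rw [ht] at hlb hub ⊢
  exact pow_between hlb hub

lemma claimB (hinv : σ⁻¹ = σ) (hσ : HGood n σ) (i : Fin n) (hi : i.1 + 1 = 2 ^ e) :
    σ i = i := by
  have hss := sigma_sigma hinv
  have hf1 : (2:ℕ) ^ (e+1) = 2 * 2 ^ e := pow_succ_fact
  by_cases hj : 2 ^ e ≤ (σ i).1
  · have hA := claimA hh1 hh2 hσ (σ i) hj
    rw [hss i] at hA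
    omega
  · obtain ⟨t, ht⟩ := hσ i
    have hlb : 2 ^ e < (σ i).1 + i.1 + 2 := by omega
    have hub : (σ i).1 + i.1 + 2 < 2 ^ (e + 2) := by
      have hf2 : (2:ℕ) ^ (e+2) = 2 * 2 ^ (e+1) := pow_succ_fact2
      omega
    rw [ht] at hlb hub
    have := pow_between hlb hub
    rw [this] at ht
    have : (σ i).1 = i.1 := by omega
    exact Fin.ext this

lemma claimAB (hinv : σ⁻¹ = σ) (hσ : HGood n σ) (i : Fin n) (hi : 2 ^ e ≤ i.1 + 1) :
    (σ i).1 + i.1 + 2 = 2 ^ (e + 1) := by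
  by_cases h : 2 ^ e ≤ i.1
  · exact claimA hh1 hh2 hσ i h
  · have hie : i.1 + 1 = 2 ^ e := by omega
    have := claimB hh1 hh2 hinv hσ i hie
    rw [this]
    have hf1 : (2:ℕ) ^ (e+1) = 2 * 2 ^ e := pow_succ_fact
    omega

lemma claimD (hinv : σ⁻¹ = σ) (hσ : HGood n σ) (i : Fin n)
    (hi : 2 ^ (e + 1) - n - 1 ≤ i.1) :
    (σ i).1 + i.1 + 2 = 2 ^ (e + 1) := by
  have hf1 : (2:ℕ) ^ (e+1) = 2 * 2 ^ e := pow_succ_fact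
  by_cases h : 2 ^ e ≤ i.1 + 1
  · exact claimAB hh1 hh2 hinv hσ i h
  · have hss := sigma_sigma hinv
    have hq : 2 ^ (e + 1) - i.1 - 2 < n := by omega
    set q : Fin n := ⟨2 ^ (e + 1) - i.1 - 2, hq⟩ with hqdef
    have hq2 : 2 ^ e ≤ q.1 + 1 := by simp only [hqdef]; omega
    have hA := claimAB hh1 hh2 hinv hσ q hq2
    have hqv : q.1 = 2 ^ (e + 1) - i.1 - 2 := rfl
    have hσq : (σ q).1 = i.1 := by omega
    have hσq' : σ q = i := Fin.ext hσq
    have : σ i = q := by rw [← hσq', hss]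
    rw [this, hqv]
    omega

lemma claimC (hinv : σ⁻¹ = σ) (hσ : HGood n σ) (i : Fin n)
    (hi : i.1 < 2 ^ (e + 1) - n - 1) :
    (σ i).1 < 2 ^ (e + 1) - n - 1 := by
  by_contra hcon
  push_neg at hcon
  have hD := claimD hh1 hh2 hinv hσ (σ i) hcon
  rw [sigma_sigma hinv i] at hD
  have := (σ i).2
  omega

end claims

section up

variable {n : ℕ} {e : ℕ}

/-- Extend a permutation of `Fin (2^(e+1) - n - 1)` to `Fin n` by pairing
each remaining 1-indexed value `v` with `2^(e+1) - v`. -/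
noncomputable def upPerm (hh1 : 2 ^ e ≤ n) (hh2 : n < 2 ^ (e + 1))
    (τ : Equiv.Perm (Fin (2 ^ (e + 1) - n - 1))) : Equiv.Perm (Fin n) where
  toFun i :=
    if h : i.1 < 2 ^ (e + 1) - n - 1 then
      ⟨(τ ⟨i.1, h⟩).1, by
        have := (τ ⟨i.1, h⟩).2
        have hf1 : (2:ℕ) ^ (e+1) = 2 * 2 ^ e := pow_succ_fact
        omega⟩
    else ⟨2 ^ (e + 1) - i.1 - 2, by have := i.2; omega⟩
  invFun i :=
    if h : i.1 < 2 ^ (e + 1) - n - 1 then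
      ⟨(τ⁻¹ ⟨i.1, h⟩).1, by
        have := (τ⁻¹ ⟨i.1, h⟩).2
        have hf1 : (2:ℕ) ^ (e+1) = 2 * 2 ^ e := pow_succ_fact
        omega⟩
    else ⟨2 ^ (e + 1) - i.1 - 2, by have := i.2; omega⟩
  left_inv i := by
    by_cases h : i.1 < 2 ^ (e + 1) - n - 1
    · simp only [dif_pos h]
      rw [dif_pos ((τ ⟨i.1, h⟩).2)]
      apply Fin.ext
      simp
    · simp only [dif_neg h]
      have hi2 := i.2
      have hcond : ¬ (2 ^ (e + 1) - i.1 - 2 < 2 ^ (e + 1) - n - 1) := by omega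
      rw [dif_neg hcond]
      apply Fin.ext
      simp only []
      omega
  right_inv i := by
    by_cases h : i.1 < 2 ^ (e + 1) - n - 1
    · simp only [dif_pos h]
      rw [dif_pos ((τ⁻¹ ⟨i.1, h⟩).2)]
      apply Fin.ext
      simp
    · simp only [dif_neg h]
      have hi2 := i.2
      have hcond : ¬ (2 ^ (e + 1) - i.1 - 2 < 2 ^ (e + 1) - n - 1) := by omega
      rw [dif_neg hcond]
      apply Fin.ext
      simp only []
      omega

lemma upPerm_apply_lt (hh1 : 2 ^ e ≤ n) (hh2 : n < 2 ^ (e + 1))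
    (τ : Equiv.Perm (Fin (2 ^ (e + 1) - n - 1))) (i : Fin n)
    (h : i.1 < 2 ^ (e + 1) - n - 1) :
    (upPerm hh1 hh2 τ i).1 = (τ ⟨i.1, h⟩).1 := by
  simp only [upPerm, Equiv.coe_fn_mk, dif_pos h]

lemma upPerm_apply_ge (hh1 : 2 ^ e ≤ n) (hh2 : n < 2 ^ (e + 1))
    (τ : Equiv.Perm (Fin (2 ^ (e + 1) - n - 1))) (i : Fin n)
    (h : ¬ i.1 < 2 ^ (e + 1) - n - 1) :
    (upPerm hh1 hh2 τ i).1 = 2 ^ (e + 1) - i.1 - 2 := by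
  simp only [upPerm, Equiv.coe_fn_mk, dif_neg h]

lemma upPerm_inv (hh1 : 2 ^ e ≤ n) (hh2 : n < 2 ^ (e + 1))
    (τ : Equiv.Perm (Fin (2 ^ (e + 1) - n - 1))) :
    (upPerm hh1 hh2 τ)⁻¹ = upPerm hh1 hh2 τ⁻¹ := by
  apply Equiv.ext
  intro i
  rfl

end up

lemma mem_GI {n : ℕ} {σ : Equiv.Perm (Fin n)} :
    σ ∈ GI n ↔ σ⁻¹ = σ ∧ HGood n σ := by
  simp [GI]

lemma GI_card {n : ℕ} (hn : 1 ≤ n) :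
    (GI (2 ^ (Nat.log 2 n + 1) - n - 1)).card = (GI n).card := by
  set e := Nat.log 2 n with he
  have hh1 : 2 ^ e ≤ n := Nat.pow_log_le_self 2 (by omega)
  have hh2 : n < 2 ^ (e + 1) := Nat.lt_pow_succ_log_self (by norm_num) n
  have hf1 : (2:ℕ) ^ (e+1) = 2 * 2 ^ e := pow_succ_fact
  set m := 2 ^ (e + 1) - n - 1 with hm
  have hmn : m ≤ n := by omega
  refine Finset.card_bij (fun τ _ => upPerm hh1 hh2 τ) ?_ ?_ ?_
  · -- maps into GI n
    intro τ hτ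
    obtain ⟨hτinv, hτg⟩ := mem_GI.mp hτ
    refine mem_GI.mpr ⟨?_, ?_⟩
    · rw [upPerm_inv, hτinv]
    · intro i
      by_cases h : i.1 < m
      · have := hτg ⟨i.1, h⟩
        rwa [upPerm_apply_lt hh1 hh2 τ i h]
      · rw [upPerm_apply_ge hh1 hh2 τ i h]
        refine ⟨e + 1, ?_⟩
        have := i.2
        omega
  · -- injective
    intro τ₁ h₁ τ₂ h₂ heq
    have heq' : upPerm hh1 hh2 τ₁ = upPerm hh1 hh2 τ₂ := heq
    apply Equiv.ext
    intro i
    have hin : i.1 < n := lt_of_lt_of_le i.2 hmn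
    have h1 := upPerm_apply_lt hh1 hh2 τ₁ ⟨i.1, hin⟩ i.2
    have h2 := upPerm_apply_lt hh1 hh2 τ₂ ⟨i.1, hin⟩ i.2
    rw [heq'] at h1
    apply Fin.ext
    rw [← h1, h2]
  · -- surjective
    intro σ hσ
    obtain ⟨hσinv, hσg⟩ := mem_GI.mp hσ
    have hss := sigma_sigma hσinv
    have hC : ∀ i : Fin n, i.1 < m → (σ i).1 < m := fun i hi =>
      claimC hh1 hh2 hσinv hσg i hi
    set f : Fin m → Fin m := fun i =>
      ⟨(σ ⟨i.1, lt_of_lt_of_le i.2 hmn⟩).1, hC _ i.2⟩ with hf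
    have hff : ∀ i, f (f i) = i := by
      intro i
      apply Fin.ext
      show (σ ⟨(f i).1, _⟩).1 = i.1
      have h1 : (⟨(f i).1, lt_of_lt_of_le (f i).2 hmn⟩ : Fin n)
          = σ ⟨i.1, lt_of_lt_of_le i.2 hmn⟩ := Fin.ext rfl
      rw [h1, hss]
    set τ : Equiv.Perm (Fin m) := ⟨f, f, hff, hff⟩ with hτ
    refine ⟨τ, ?_, ?_⟩
    · refine mem_GI.mpr ⟨Equiv.ext fun i => rfl, ?_⟩
      intro i
      exact hσg ⟨i.1, lt_of_lt_of_le i.2 hmn⟩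
    · apply Equiv.ext
      intro j
      apply Fin.ext
      by_cases h : j.1 < m
      · rw [upPerm_apply_lt hh1 hh2 τ j h]
        show (σ ⟨j.1, _⟩).1 = (σ j).1
        congr 1
      · rw [upPerm_apply_ge hh1 hh2 τ j h]
        have hD := claimD hh1 hh2 hσinv hσg j (by omega)
        omega

lemma GI_odd : ∀ n : ℕ, Odd (GI n).card := by
  intro n
  induction n using Nat.strong_induction_on with
  | _ n ih =>
    rcases Nat.eq_zero_or_pos n with rfl | hn
    · have : (GI 0) = Finset.univ := by
        apply Finset.eq_univ_of_forall
        intro σ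
        refine mem_GI.mpr ⟨Subsingleton.elim _ _, fun i => i.elim0⟩
      rw [this, Finset.card_univ]
      simp [Fintype.card_perm]
    · have hh1 : 2 ^ Nat.log 2 n ≤ n := Nat.pow_log_le_self 2 (by omega)
      have hf1 : (2:ℕ) ^ (Nat.log 2 n + 1) = 2 * 2 ^ Nat.log 2 n := pow_succ_fact
      rw [← GI_card hn]
      exact ih _ (by omega)

/-- The 1-indexed "power of two" 0-1 matrix over `ZMod 2`. -/
noncomputable def MM (n : ℕ) : Matrix (Fin n) (Fin n) (ZMod 2) :=
  Matrix.of fun i j => if isPow2 (i.1 + j.1 + 2) then 1 else 0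

lemma HGood_inv {n : ℕ} {σ : Equiv.Perm (Fin n)} (h : HGood n σ) : HGood n σ⁻¹ := by
  intro i
  have h1 := h (σ⁻¹ i)
  rw [show σ (σ⁻¹ i) = i from Equiv.apply_symm_apply σ i] at h1
  have h2 : (σ⁻¹ i).1 + i.1 + 2 = i.1 + (σ⁻¹ i).1 + 2 := by omega
  rw [h2]
  exact h1

lemma det_MM (n : ℕ) : (MM n).det = ((GI n).card : ZMod 2) := by
  rw [Matrix.det_apply]
  have hterm : ∀ σ : Equiv.Perm (Fin n),
      (Equiv.Perm.sign σ • ∏ i, MM n (σ i) i) = (if HGood n σ then 1 else 0 : ZMod 2) := by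
    intro σ
    have hsign : (Equiv.Perm.sign σ • ∏ i, MM n (σ i) i) = ∏ i, MM n (σ i) i := by
      rw [Units.smul_def, zsmul_eq_mul]
      rcases Int.units_eq_one_or (Equiv.Perm.sign σ) with h | h
      · rw [h]; simp
      · rw [h]
        have : (((-1 : Units ℤ) : ℤ) : ZMod 2) = 1 := by decide
        rw [this, one_mul]
    rw [hsign]
    by_cases hg : HGood n σ
    · rw [if_pos hg]
      apply Finset.prod_eq_one
      intro i _
      show (if isPow2 ((σ i).1 + i.1 + 2) then (1 : ZMod 2) else 0) = 1
      rw [if_pos (hg i)]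
    · rw [if_neg hg]
      rw [HGood] at hg
      push_neg at hg
      obtain ⟨i, hi⟩ := hg
      apply Finset.prod_eq_zero (Finset.mem_univ i)
      show (if isPow2 ((σ i).1 + i.1 + 2) then (1 : ZMod 2) else 0) = 0
      rw [if_neg hi]
  rw [Finset.sum_congr rfl fun σ _ => hterm σ]
  rw [← Finset.sum_filter_add_sum_filter_not Finset.univ (fun σ => σ⁻¹ = σ)]
  have hzero : ∑ σ ∈ Finset.univ.filter (fun σ : Equiv.Perm (Fin n) => ¬σ⁻¹ = σ),
      (if HGood n σ then 1 else 0 : ZMod 2) = 0 := by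
    apply Finset.sum_involution (fun σ _ => σ⁻¹)
    · intro σ hσ
      have : HGood n σ ↔ HGood n σ⁻¹ := by
        constructor
        · exact HGood_inv
        · intro h; have := HGood_inv h; rwa [inv_inv] at this
      rw [← this]
      by_cases hg : HGood n σ
      · simp only [if_pos hg]; decide
      · simp only [if_neg hg]; decide
    · intro σ hσ _
      exact (Finset.mem_filter.mp hσ).2
    · intro σ hσ
      exact inv_inv σ
    · intro σ hσ
      rw [Finset.mem_filter] at hσ ⊢
      refine ⟨Finset.mem_univ _, ?_⟩
      intro hcon
      rw [inv_inv] at hcon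
      exact hσ.2 hcon.symm
  rw [hzero, add_zero, Finset.sum_boole, Finset.filter_filter]
  rfl

lemma det_MM_eq_one (n : ℕ) : (MM n).det = 1 := by
  rw [det_MM]
  obtain ⟨t, ht⟩ := GI_odd n
  rw [ht]
  push_cast
  have h2 : (2 : ZMod 2) = 0 := rfl
  ring_nf
  rw [mul_comm, h2]
  ring

theorem hankel_det_odd_quotient (k : ℕ) (hk : 1 ≤ k) (x : ℕ → ℤ) (hx0 : x 0 = 1)
    (hdvd : ∀ i : ℕ, 1 ≤ i → (2 * k : ℤ) ∣ x i)
    (hiff : ∀ i : ℕ, 1 ≤ i → ((4 * k : ℤ) ∣ x i ↔ ¬ ∃ j : ℕ, i = 2 ^ j)) (n : ℕ) :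
    ∃ m : ℤ, Odd m ∧
      Matrix.det (Matrix.of fun i j : Fin (n + 1) => x (i.1 + j.1)) = (2 * k : ℤ) ^ n * m := by
  have h2k : (2 * (k : ℤ)) ≠ 0 := by positivity
  set y : ℕ → ℤ := fun i => x i / (2 * (k : ℤ)) with hy
  have hxy : ∀ i : ℕ, 1 ≤ i → x i = 2 * (k : ℤ) * y i := fun i hi =>
    (Int.mul_ediv_cancel' (hdvd i hi)).symm
  -- parity of y
  have hycast : ∀ i : ℕ, 1 ≤ i →
      ((y i : ℤ) : ZMod 2) = if isPow2 i then 1 else 0 := by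
    intro i hi
    have hdy : (2 : ℤ) ∣ y i ↔ (4 * (k : ℤ)) ∣ x i := by
      constructor
      · rintro ⟨c, hc⟩
        exact ⟨c, by rw [hxy i hi, hc]; ring⟩
      · rintro ⟨c, hc⟩
        refine ⟨c, ?_⟩
        apply mul_left_cancel₀ h2k
        rw [← hxy i hi, hc]; ring
    by_cases hp : isPow2 i
    · rw [if_pos hp]
      have hodd : ¬ (2 : ℤ) ∣ y i := by
        rw [hdy, hiff i hi]
        intro hcon
        exact hcon hp
      have hoddy : Odd (y i) :=
        Int.not_even_iff_odd.mp (fun he => hodd (even_iff_two_dvd.mp he))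
      obtain ⟨c, hc⟩ := hoddy
      rw [hc]
      push_cast
      have h2 : ((2:ℤ) : ZMod 2) = 0 := by decide
      rw [show ((2:ZMod 2)) = 0 from rfl]
      ring
    · rw [if_neg hp]
      have heven : (2 : ℤ) ∣ y i := by
        rw [hdy, hiff i hi]
        exact fun h => hp h
      obtain ⟨c, hc⟩ := heven
      rw [hc]
      push_cast
      rw [show ((2:ZMod 2)) = 0 from rfl]
      ring
  set d : Fin (n+1) → ℤ := fun i => if i.1 = 0 then 1 else 2 * (k : ℤ) with hd
  set Z : Matrix (Fin (n+1)) (Fin (n+1)) ℤ :=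
    Matrix.of (fun i j : Fin (n+1) => if i.1 = 0 then x j.1 else y (i.1 + j.1)) with hZ
  have hH : Matrix.of (fun i j : Fin (n+1) => x (i.1 + j.1)) = Matrix.diagonal d * Z := by
    ext i j
    rw [Matrix.diagonal_mul]
    by_cases hi : i.1 = 0
    · simp only [Matrix.of_apply, hd, hZ]
      rw [if_pos hi, if_pos hi, hi, one_mul, Nat.zero_add]
    · have hi1 : 1 ≤ i.1 + j.1 := by omega
      simp only [Matrix.of_apply, hd, hZ, if_neg hi]
      rw [← hxy _ hi1]
  have hprod : ∏ i : Fin (n+1), d i = (2 * (k:ℤ)) ^ n := by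
    rw [Fin.prod_univ_succ]
    have h0 : d 0 = 1 := rfl
    have hsucc : ∀ i : Fin n, d i.succ = 2 * (k:ℤ) := by
      intro i
      simp only [hd, Fin.val_succ]
      rw [if_neg (by omega)]
    rw [h0, one_mul, Finset.prod_congr rfl fun i _ => hsucc i]
    simp
  -- the quotient determinant is odd
  have hZdet : ((Z.det : ℤ) : ZMod 2) = 1 := by
    have hmap := RingHom.map_det (Int.castRingHom (ZMod 2)) Z
    rw [RingHom.mapMatrix_apply] at hmap
    show (Int.castRingHom (ZMod 2)) Z.det = 1
    rw [hmap]
    set W : Matrix (Fin (n+1)) (Fin (n+1)) (ZMod 2) :=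
      Matrix.of (fun i j : Fin (n+1) =>
        if i.1 = 0 then (if j.1 = 0 then (1:ZMod 2) else 0)
        else (if isPow2 (i.1 + j.1) then 1 else 0)) with hW
    have hZW : Z.map (Int.castRingHom (ZMod 2)) = W := by
      ext i j
      simp only [Matrix.map_apply, hZ, hW, Matrix.of_apply]
      by_cases hi : i.1 = 0
      · rw [if_pos hi, if_pos hi]
        by_cases hj : j.1 = 0
        · rw [if_pos hj, hj, hx0]
          simp
        · rw [if_neg hj]
          show ((x j.1 : ℤ) : ZMod 2) = 0
          rw [ZMod.intCast_zmod_eq_zero_iff_dvd]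
          have := hdvd j.1 (by omega)
          push_cast
          exact dvd_trans ⟨(k:ℤ), by ring⟩ this
      · rw [if_neg hi, if_neg hi]
        exact hycast (i.1 + j.1) (by omega)
    rw [hZW]
    rw [Matrix.det_succ_row_zero]
    rw [Finset.sum_eq_single_of_mem (0 : Fin (n+1)) (Finset.mem_univ _)]
    · have hW0 : W 0 (0 : Fin (n+1)) = 1 := by
        simp only [hW, Matrix.of_apply]
        rfl
      rw [hW0]
      have hsub : W.submatrix Fin.succ ((0 : Fin (n+1)).succAbove) = MM n := by
        rw [Fin.succAbove_zero]
        ext i j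
        simp only [Matrix.submatrix_apply, hW, Matrix.of_apply, MM, Fin.val_succ]
        rw [if_neg (by omega : ¬ (i.1 + 1 = 0))]
        have harg : i.1 + 1 + (j.1 + 1) = i.1 + j.1 + 2 := by omega
        simp only [harg]
      rw [hsub, det_MM_eq_one]
      simp
    · intro j _ hj
      have hW0 : W 0 j = 0 := by
        simp only [hW, Matrix.of_apply]
        have h0 : ((0 : Fin (n+1)) : ℕ) = 0 := rfl
        rw [if_pos h0, if_neg (show ¬ (j.1 = 0) from fun h => hj (Fin.ext h))]
      rw [hW0]
      ring
  have hodd : Odd Z.det := by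
    rw [← Int.not_even_iff_odd, even_iff_two_dvd]
    intro hcon
    have hcon' : (Z.det : ZMod 2) = 0 :=
      (ZMod.intCast_zmod_eq_zero_iff_dvd Z.det 2).mpr (by exact_mod_cast hcon)
    rw [hZdet] at hcon'
    exact one_ne_zero hcon'
  refine ⟨Z.det, hodd, ?_⟩
  rw [hH, Matrix.det_mul, Matrix.det_diagonal, hprod]

-- #print axioms hankel_det_odd_quotient
end

section
/- For every nonnegative integer n, the Hankel determinant det[A_{i+j}]_{0≤i,j≤n} of the Apéry numbers A_m = ∑_{k=0}^m C(m,k)^2 C(m+k,k)^2 is divisible by 24^n. -/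
open Finset

namespace AperyHankelAux

def ap (m : ℕ) : ℕ := ∑ k ∈ Finset.range (m + 1), (m.choose k) ^ 2 * ((m + k).choose k) ^ 2

instance f2 : Fact (Nat.Prime 2) := ⟨by norm_num⟩
instance f3 : Fact (Nat.Prime 3) := ⟨by norm_num⟩

lemma lucas (p : ℕ) [Fact p.Prime] (n k : ℕ) :
    ((n.choose k : ℕ) : ZMod p)
      = ((n % p).choose (k % p) : ℕ) * ((n / p).choose (k / p) : ℕ) := by
  have h := @Choose.choose_modEq_choose_mod_mul_choose_div_nat n k p _
  have h2 := (ZMod.natCast_eq_natCast_iff _ _ _).mpr h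
  simpa using h2

lemma sum_range_three_mul {α : Type*} [AddCommMonoid α] (f : ℕ → α) (N : ℕ) :
    ∑ k ∈ range (3 * N), f k = ∑ q ∈ range N, (f (3 * q) + f (3 * q + 1) + f (3 * q + 2)) := by
  induction N with
  | zero => simp
  | succ N ih =>
    have h3 : 3 * (N + 1) = 3 * N + 1 + 1 + 1 := by ring
    rw [h3, Finset.sum_range_succ, Finset.sum_range_succ, Finset.sum_range_succ, ih,
      Finset.sum_range_succ]
    have e1 : 3 * N + 1 + 1 = 3 * N + 2 := rfl
    rw [e1]
    simp only [add_assoc]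

lemma ap_cast3 (m : ℕ) :
    ((ap m : ℕ) : ZMod 3)
      = (if m % 3 = 1 then 2 else 1) * ((ap (m / 3) : ℕ) : ZMod 3) := by
  have hm : 3 * (m / 3) + m % 3 = m := Nat.div_add_mod m 3
  have ht3 : m % 3 < 3 := Nat.mod_lt _ (by norm_num)
  set M := m / 3 with hM
  set t := m % 3 with ht
  clear_value t
  -- the summand, cast into ZMod 3
  set F : ℕ → ZMod 3 := fun k => (((m.choose k) ^ 2 * ((m + k).choose k) ^ 2 : ℕ) : ZMod 3)
    with hF
  have hcast : ((ap m : ℕ) : ZMod 3) = ∑ k ∈ range (3 * (M + 1)), F k := by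
    rw [ap, Nat.cast_sum]
    apply Finset.sum_subset
    · exact Finset.range_subset_range.mpr (by omega)
    · intro k _ hk
      have hk2 : m < k := by simp only [Finset.mem_range] at hk; omega
      simp [hF, Nat.choose_eq_zero_of_lt hk2]
  -- per-term evaluation
  have term_lt : ∀ q r : ℕ, r < 3 → t + r < 3 →
      F (3 * q + r) = (((t.choose r) ^ 2 * ((t + r).choose r) ^ 2 : ℕ) : ZMod 3) *
        (((M.choose q) ^ 2 * ((M + q).choose q) ^ 2 : ℕ) : ZMod 3) := by
    intro q r hr htr
    have e1 : (3 * q + r) % 3 = r := by omega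
    have e2 : (3 * q + r) / 3 = q := by omega
    have e3 : (m + (3 * q + r)) % 3 = t + r := by omega
    have e4 : (m + (3 * q + r)) / 3 = M + q := by omega
    simp only [hF]
    push_cast
    rw [lucas 3 m (3 * q + r), lucas 3 (m + (3 * q + r)) (3 * q + r)]
    rw [e1, e2, e3, e4, ← ht, ← hM]
    push_cast
    ring
  have term_ge : ∀ q r : ℕ, r < 3 → 3 ≤ t + r → F (3 * q + r) = 0 := by
    intro q r hr htr
    have e3 : (m + (3 * q + r)) % 3 = t + r - 3 := by omega
    have e5 : (3 * q + r) % 3 = r := by omega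
    have hz : (t + r - 3).choose r = 0 := Nat.choose_eq_zero_of_lt (by omega)
    simp only [hF]
    push_cast
    rw [lucas 3 (m + (3 * q + r)) (3 * q + r), e3, e5, hz]
    push_cast
    ring
  rw [hcast, sum_range_three_mul F (M + 1)]
  have hsum : ∀ q : ℕ, F (3 * q) + F (3 * q + 1) + F (3 * q + 2)
      = (if t = 1 then 2 else 1) *
        (((M.choose q) ^ 2 * ((M + q).choose q) ^ 2 : ℕ) : ZMod 3) := by
    intro q
    have h0 : (3 : ℕ) * q = 3 * q + 0 := by ring
    interval_cases t
    · rw [h0, term_lt q 0 (by norm_num) (by omega), term_lt q 1 (by norm_num) (by omega),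
        term_lt q 2 (by norm_num) (by omega)]
      generalize (((M.choose q) ^ 2 * ((M + q).choose q) ^ 2 : ℕ) : ZMod 3) = X
      revert X
      decide
    · rw [h0, term_lt q 0 (by norm_num) (by omega), term_lt q 1 (by norm_num) (by omega),
        term_ge q 2 (by norm_num) (by omega)]
      generalize (((M.choose q) ^ 2 * ((M + q).choose q) ^ 2 : ℕ) : ZMod 3) = X
      revert X
      decide
    · rw [h0, term_lt q 0 (by norm_num) (by omega), term_ge q 1 (by norm_num) (by omega),
        term_ge q 2 (by norm_num) (by omega)]
      generalize (((M.choose q) ^ 2 * ((M + q).choose q) ^ 2 : ℕ) : ZMod 3) = X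
      revert X
      decide
  rw [Finset.sum_congr rfl (fun q _ => hsum q), ← Finset.mul_sum]
  congr 1
  rw [ap, Nat.cast_sum]

lemma ap_zero : ap 0 = 1 := by simp [ap]

lemma ap_mod3 : ∀ m : ℕ, ((ap m : ℕ) : ZMod 3) = if m % 2 = 0 then 1 else 2 := by
  intro m
  induction m using Nat.strong_induction_on with
  | _ m ih =>
    rcases Nat.eq_zero_or_pos m with h0 | hpos
    · subst h0; simp [ap_zero]
    · rw [ap_cast3 m, ih (m / 3) (Nat.div_lt_self hpos (by norm_num))]
      have h1 : m % 3 < 3 := Nat.mod_lt _ (by norm_num)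
      have h2 : m % 2 = (m / 3 % 2 + m % 3) % 2 := by omega
      split_ifs with a b c d e <;> first
        | rfl
        | (try omega) <;> (try decide)
      all_goals omega

lemma central (j : ℕ) : (2 * (j + 1)).choose (j + 1) = 2 * ((2 * j + 1).choose j) := by
  have h1 : 2 * (j + 1) = (2 * j + 1) + 1 := by ring
  rw [h1, Nat.choose_succ_succ]
  have h2 : (2 * j + 1).choose (j + 1) = (2 * j + 1).choose j := by
    have h3 := Nat.choose_symm (by omega : j + 1 ≤ 2 * j + 1)
    have h4 : 2 * j + 1 - (j + 1) = j := by omega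
    rw [h4] at h3
    exact h3.symm
  simp only [Nat.succ_eq_add_one] at *
  omega

lemma choose_one_fun (x : ℕ) (hx : x < 2) : (1).choose x = 1 := by interval_cases x <;> rfl

lemma gpow2 : ∀ n : ℕ, (((n.choose (n / 2)) : ℕ) : ZMod 2) = 1 ↔ ∃ t : ℕ, n + 1 = 2 ^ t := by
  intro n
  induction n using Nat.strong_induction_on with
  | _ n ih =>
    rcases Nat.eq_zero_or_pos n with h0 | hpos
    · subst h0
      constructor
      · intro _; exact ⟨0, rfl⟩
      · intro _; norm_num
    · have L := lucas 2 n (n / 2)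
      rcases Nat.even_or_odd n with ⟨m, hm⟩ | ⟨m, hm⟩
      · -- n = 2m, m ≥ 1
        have hm' : n = 2 * m := by omega
        have hmpos : 1 ≤ m := by omega
        have e1 : n % 2 = 0 := by omega
        have e2 : n / 2 = m := by omega
        rw [e1, e2] at L
        rcases Nat.even_or_odd m with ⟨m', hmm⟩ | ⟨m', hmm⟩
        · -- m even, m ≥ 2
          have e3 : m % 2 = 0 := by omega
          rw [e3] at L
          have hL : ((n.choose (n / 2) : ℕ) : ZMod 2) = ((m.choose (m / 2) : ℕ) : ZMod 2) := by
            rw [e2, L]; simp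
          rw [hL, ih m (by omega)]
          constructor
          · rintro ⟨t, htt⟩
            exfalso
            rcases t with _ | t
            · omega
            · have : 2 ^ (t + 1) = 2 * 2 ^ t := by ring
              omega
          · rintro ⟨t, htt⟩
            exfalso
            rcases t with _ | t
            · omega
            · have : 2 ^ (t + 1) = 2 * 2 ^ t := by ring
              omega
        · -- m odd
          have e3 : m % 2 = 1 := by omega
          rw [e3] at L
          have hz : (0).choose 1 = 0 := rfl
          rw [hz] at L
          have hL : ((n.choose (n / 2) : ℕ) : ZMod 2) = 0 := by rw [e2, L]; simp
          rw [hL]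
          constructor
          · intro h; exact absurd h (by decide)
          · rintro ⟨t, htt⟩
            exfalso
            rcases t with _ | t
            · omega
            · have : 2 ^ (t + 1) = 2 * 2 ^ t := by ring
              omega
      · -- n = 2m+1
        have e1 : n % 2 = 1 := by omega
        have e2 : n / 2 = m := by omega
        rw [e1, e2] at L
        have hone : (1).choose (m % 2) = 1 := choose_one_fun _ (Nat.mod_lt _ (by norm_num))
        rw [hone] at L
        have hL : ((n.choose (n / 2) : ℕ) : ZMod 2) = ((m.choose (m / 2) : ℕ) : ZMod 2) := by
          rw [e2, L]; simp
        rw [hL, ih m (by omega)]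
        constructor
        · rintro ⟨t, htt⟩
          refine ⟨t + 1, ?_⟩
          have : 2 ^ (t + 1) = 2 * 2 ^ t := by ring
          omega
        · rintro ⟨t, htt⟩
          rcases t with _ | t
          · omega
          · refine ⟨t, ?_⟩
            have : 2 ^ (t + 1) = 2 * 2 ^ t := by ring
            omega

lemma dpar (j : ℕ) :
    (((2 * j + 1).choose j : ℕ) : ZMod 2) = 1 ↔ ∃ a : ℕ, j + 1 = 2 ^ a := by
  have L := lucas 2 (2 * j + 1) j
  have e1 : (2 * j + 1) % 2 = 1 := by omega
  have e2 : (2 * j + 1) / 2 = j := by omega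
  rw [e1, e2, choose_one_fun _ (Nat.mod_lt _ (by norm_num))] at L
  rw [L]
  simpa using gpow2 j

lemma powbit (b : ℕ) : ∀ x : ℕ, ((x.choose (2 ^ b) : ℕ) : ZMod 2) = ((x / 2 ^ b % 2 : ℕ) : ZMod 2) := by
  induction b with
  | zero =>
    intro x
    simp only [pow_zero, Nat.choose_one_right, Nat.div_one]
    rw [ZMod.natCast_mod]
  | succ b ih =>
    intro x
    rw [lucas 2 x (2 ^ (b + 1))]
    have e1 : 2 ^ (b + 1) % 2 = 0 := by
      have : 2 ^ (b + 1) = 2 * 2 ^ b := by ring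
      omega
    have e2 : 2 ^ (b + 1) / 2 = 2 ^ b := by
      have : 2 ^ (b + 1) = 2 * 2 ^ b := by ring
      omega
    rw [e1, e2, Nat.choose_zero_right, ih (x / 2)]
    have e3 : x / 2 / 2 ^ b = x / 2 ^ (b + 1) := by
      rw [Nat.div_div_eq_div_mul]
      congr 1
      ring
    rw [e3]
    simp

lemma bitstep (m a : ℕ) :
    (m + 2 ^ a) / 2 ^ (a + 1) % 2 = (m / 2 ^ a % 2 + m / 2 ^ (a + 1) % 2) % 2 := by
  have hpos : 0 < 2 ^ a := Nat.pow_pos (by norm_num)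
  have h1 : (m + 2 ^ a) / 2 ^ (a + 1) = (m / 2 ^ a + 1) / 2 := by
    have e : (2 : ℕ) ^ (a + 1) = 2 ^ a * 2 := by ring
    rw [e, ← Nat.div_div_eq_div_mul, Nat.add_div_right _ hpos]
  have h2 : m / 2 ^ (a + 1) = m / 2 ^ a / 2 := by
    have e : (2 : ℕ) ^ (a + 1) = 2 ^ a * 2 := by ring
    rw [e, ← Nat.div_div_eq_div_mul]
  rw [h1, h2]
  generalize m / 2 ^ a = q
  omega

lemma two01 : ∀ z : ZMod 2, z = 0 ∨ z = 1 := by decide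

lemma Npar (m : ℕ) :
    ((∑ i ∈ range m, (m + (i + 1)).choose (2 * (i + 1)) * ((2 * i + 1).choose i) : ℕ) : ZMod 2)
      = (m : ZMod 2) := by
  have hp2 : (1 : ℕ) < 2 := by norm_num
  -- cast the sum
  rw [Nat.cast_sum]
  have step1 : ∀ i : ℕ, (((m + (i + 1)).choose (2 * (i + 1)) * ((2 * i + 1).choose i) : ℕ) : ZMod 2)
      = ((m + (i + 1)).choose (2 * (i + 1)) : ZMod 2) * (((2 * i + 1).choose i : ℕ) : ZMod 2) := by
    intro i; push_cast; ring
  simp only [step1]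
  -- restrict to powers of two
  set f : ℕ → ZMod 2 :=
    fun i => ((m + (i + 1)).choose (2 * (i + 1)) : ZMod 2) * (((2 * i + 1).choose i : ℕ) : ZMod 2)
    with hf
  set g : ℕ → ZMod 2 := fun a => (((m + 2 ^ a).choose (2 ^ (a + 1)) : ℕ) : ZMod 2) with hg
  have hfilter1 : ∑ i ∈ range m, f i
      = ∑ i ∈ (range m).filter (fun i => i + 1 = 2 ^ (Nat.log 2 (i + 1))), f i := by
    rw [Finset.sum_filter_of_ne]
    intro i _ hne
    by_contra hnp
    apply hne
    have : (((2 * i + 1).choose i : ℕ) : ZMod 2) = 0 := by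
      rcases two01 (((2 * i + 1).choose i : ℕ) : ZMod 2) with h | h
      · exact h
      · exfalso
        obtain ⟨a, ha⟩ := (dpar i).mp h
        exact hnp (by rw [ha, Nat.log_pow hp2])
    rw [hf]
    simp only []
    rw [this, mul_zero]
  have hfilter2 : ∑ a ∈ range (m + 1), g a
      = ∑ a ∈ (range (m + 1)).filter (fun a => 2 ^ a ≤ m), g a := by
    rw [Finset.sum_filter_of_ne]
    intro a _ hne
    by_contra hnp
    apply hne
    have hlt : m + 2 ^ a < 2 ^ (a + 1) := by
      have : (2 : ℕ) ^ (a + 1) = 2 * 2 ^ a := by ring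
      omega
    rw [hg]
    simp only []
    rw [Nat.choose_eq_zero_of_lt hlt]
    simp
  have hbij : ∑ i ∈ (range m).filter (fun i => i + 1 = 2 ^ (Nat.log 2 (i + 1))), f i
      = ∑ a ∈ (range (m + 1)).filter (fun a => 2 ^ a ≤ m), g a := by
    refine Finset.sum_nbij' (fun i => Nat.log 2 (i + 1)) (fun a => 2 ^ a - 1) ?_ ?_ ?_ ?_ ?_
    · intro i hi
      simp only [Finset.mem_filter, Finset.mem_range] at hi ⊢
      obtain ⟨hilt, hieq⟩ := hi
      constructor
      · have h1 : Nat.log 2 (i + 1) < 2 ^ (Nat.log 2 (i + 1)) := Nat.lt_two_pow_self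
        omega
      · omega
    · intro a ha
      simp only [Finset.mem_filter, Finset.mem_range] at ha ⊢
      obtain ⟨halt, hale⟩ := ha
      have hpos : 0 < 2 ^ a := Nat.pow_pos (by norm_num)
      constructor
      · omega
      · have : 2 ^ a - 1 + 1 = 2 ^ a := by omega
        rw [this, Nat.log_pow hp2]
    · intro i hi
      simp only [Finset.mem_filter, Finset.mem_range] at hi
      show 2 ^ (Nat.log 2 (i + 1)) - 1 = i
      omega
    · intro a ha
      simp only [Finset.mem_filter, Finset.mem_range] at ha
      have hpos : 0 < 2 ^ a := Nat.pow_pos (by norm_num)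
      have h9 : 2 ^ a - 1 + 1 = 2 ^ a := by omega
      show Nat.log 2 (2 ^ a - 1 + 1) = a
      rw [h9, Nat.log_pow hp2]
    · intro i hi
      simp only [Finset.mem_filter, Finset.mem_range] at hi
      obtain ⟨hilt, hieq⟩ := hi
      rw [hf, hg]
      simp only []
      have hd : (((2 * i + 1).choose i : ℕ) : ZMod 2) = 1 :=
        (dpar i).mpr ⟨Nat.log 2 (i + 1), hieq⟩
      rw [hd, mul_one]
      have h1 : m + 2 ^ (Nat.log 2 (i + 1)) = m + (i + 1) := by omega
      have h2 : (2 : ℕ) ^ (Nat.log 2 (i + 1) + 1) = 2 * (i + 1) := by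
        rw [pow_succ]
        omega
      rw [h1, h2]
  rw [hfilter1, hbij, ← hfilter2]
  -- now the telescoping computation
  set Y : ℕ → ZMod 2 := fun a => ((m / 2 ^ a % 2 : ℕ) : ZMod 2) with hY
  have hterm : ∀ a : ℕ, g a = Y a + Y (a + 1) := by
    intro a
    rw [hg, hY]
    simp only []
    rw [powbit (a + 1) (m + 2 ^ a), bitstep m a]
    push_cast [Nat.cast_add]
    rw [ZMod.natCast_mod]
    push_cast
    ring
  simp only [hterm]
  rw [Finset.sum_add_distrib]
  have hsucc' := Finset.sum_range_succ' Y (m + 1)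
  have hsucc := Finset.sum_range_succ Y (m + 1)
  have hkey : ∑ a ∈ range (m + 1), Y (a + 1) + Y 0 = ∑ a ∈ range (m + 1), Y a + Y (m + 1) := by
    rw [← hsucc', ← hsucc]
  have hself : ∀ z : ZMod 2, z + z = 0 := by decide
  have hYlast : Y (m + 1) = 0 := by
    rw [hY]
    simp only []
    have h1 : m < 2 ^ (m + 1) := by
      calc m < 2 ^ m := Nat.lt_two_pow_self
      _ ≤ 2 ^ (m + 1) := Nat.pow_le_pow_right (by norm_num) (by omega)
    rw [Nat.div_eq_of_lt h1]
    simp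
  have hY0 : Y 0 = (m : ZMod 2) := by
    rw [hY]
    simp only [pow_zero, Nat.div_one]
    rw [ZMod.natCast_mod]
  set S := ∑ a ∈ range (m + 1), Y a with hS
  calc S + ∑ a ∈ range (m + 1), Y (a + 1)
      = S + ∑ a ∈ range (m + 1), Y (a + 1) + (Y 0 + Y 0) := by rw [hself, add_zero]
    _ = S + (∑ a ∈ range (m + 1), Y (a + 1) + Y 0) + Y 0 := by ring
    _ = S + (S + Y (m + 1)) + Y 0 := by rw [hkey]
    _ = (S + S) + (Y (m + 1) + Y 0) := by ring
    _ = Y (m + 1) + Y 0 := by rw [hself, zero_add]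
    _ = (m : ZMod 2) := by rw [hYlast, hY0, zero_add]

lemma ap_nat (m : ℕ) : ap m
    = (∑ i ∈ range m, ((m + (i + 1)).choose (2 * (i + 1)) * (2 * ((2 * i + 1).choose i))) ^ 2)
      + 1 := by
  rw [ap, Finset.sum_range_succ']
  congr 1
  · apply Finset.sum_congr rfl
    intro i hi
    have him : i + 1 ≤ m := by simp only [Finset.mem_range] at hi; omega
    have hmul : m.choose (i + 1) * (m + (i + 1)).choose (i + 1)
        = (m + (i + 1)).choose (2 * (i + 1)) * (2 * (i + 1)).choose (i + 1) := by
      have h := Nat.choose_mul (n := m + (i + 1))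
        (by omega : i + 1 ≤ 2 * (i + 1))
      have e1 : m + (i + 1) - (i + 1) = m := by omega
      have e2 : 2 * (i + 1) - (i + 1) = i + 1 := by omega
      rw [e1, e2] at h
      rw [h]
      ring
    calc m.choose (i + 1) ^ 2 * ((m + (i + 1)).choose (i + 1)) ^ 2
        = (m.choose (i + 1) * (m + (i + 1)).choose (i + 1)) ^ 2 := by ring
      _ = ((m + (i + 1)).choose (2 * (i + 1)) * (2 * (i + 1)).choose (i + 1)) ^ 2 := by
          rw [hmul]
      _ = ((m + (i + 1)).choose (2 * (i + 1)) * (2 * ((2 * i + 1).choose i))) ^ 2 := by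
          rw [central i]
  · simp

lemma four_sq : ∀ y : ZMod 8, 4 * y ^ 2 = 4 * y := by decide

lemma four_parity (x : ℕ) : (4 : ZMod 8) * (x : ZMod 8) = 4 * ((x % 2 : ℕ) : ZMod 8) := by
  have h := Nat.div_add_mod x 2
  have h8 : ((8 : ℕ) : ZMod 8) = 0 := by decide
  calc (4 : ZMod 8) * (x : ZMod 8) = 4 * (((2 * (x / 2) + x % 2 : ℕ)) : ZMod 8) := by rw [h]
    _ = ((8 : ℕ) : ZMod 8) * ((x / 2 : ℕ) : ZMod 8) + 4 * ((x % 2 : ℕ) : ZMod 8) := by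
        push_cast; ring
    _ = 4 * ((x % 2 : ℕ) : ZMod 8) := by rw [h8]; ring

lemma ap_mod8 (m : ℕ) : ((ap m : ℕ) : ZMod 8) = if m % 2 = 0 then 1 else 5 := by
  rw [ap_nat m]
  push_cast
  rw [Finset.sum_congr rfl (fun i (_ : i ∈ range m) => by
    have : (((m + (i + 1)).choose (2 * (i + 1)) : ZMod 8) * (2 * ((2 * i + 1).choose i : ZMod 8))) ^ 2
        = 4 * (((m + (i + 1)).choose (2 * (i + 1)) * ((2 * i + 1).choose i) : ℕ) : ZMod 8) := by
      push_cast
      rw [show (((m + (i + 1)).choose (2 * (i + 1)) : ZMod 8) * (2 * ((2 * i + 1).choose i : ZMod 8))) ^ 2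
          = 4 * (((m + (i + 1)).choose (2 * (i + 1)) : ZMod 8) * (((2 * i + 1).choose i : ZMod 8))) ^ 2
          from by ring]
      rw [four_sq]
    exact this)]
  rw [← Finset.mul_sum, ← Nat.cast_sum]
  set N := ∑ i ∈ range m, (m + (i + 1)).choose (2 * (i + 1)) * ((2 * i + 1).choose i) with hN
  have hpar : N % 2 = m % 2 := by
    have h := Npar m
    rw [← hN] at h
    have h2 : (N : ZMod 2) = ((m % 2 : ℕ) : ZMod 2) := by rw [h, ZMod.natCast_mod]
    have := (ZMod.natCast_eq_natCast_iff _ _ _).mp h2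
    unfold Nat.ModEq at this
    omega
  rw [four_parity N, hpar]
  rcases Nat.mod_two_eq_zero_or_one m with h | h <;> rw [h] <;> decide

lemma ap_modeq (m : ℕ) : ap m ≡ (if m % 2 = 0 then 1 else 5) [MOD 24] := by
  set r : ℕ := if m % 2 = 0 then 1 else 5 with hr
  have h8 : ap m ≡ r [MOD 8] := by
    rw [← ZMod.natCast_eq_natCast_iff, ap_mod8 m, hr]
    split_ifs <;> norm_num
  have h3 : ap m ≡ r [MOD 3] := by
    rw [← ZMod.natCast_eq_natCast_iff, ap_mod3 m, hr]
    split_ifs <;> decide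
  have hco : Nat.Coprime 8 3 := by norm_num
  have h := (Nat.modEq_and_modEq_iff_modEq_mul hco).mp ⟨h8, h3⟩
  simpa using h

lemma ap_int (m : ℕ) :
    (24 : ℤ) ∣ ((ap m : ℤ) - (if m % 2 = 0 then 1 else 5)) := by
  have h := (Nat.modEq_iff_dvd (n := 24)).mp (ap_modeq m).symm
  rcases Nat.mod_two_eq_zero_or_one m with hm | hm <;>
    · rw [hm] at h ⊢
      simpa using h

end AperyHankelAux

open AperyHankelAux

theorem apery_A_hankel_det_div (n : ℕ) :
    (24 : ℤ) ^ n ∣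
      Matrix.det (Matrix.of fun i j : Fin (n + 1) =>
        ((∑ k ∈ Finset.range (i.1 + j.1 + 1),
            ((i.1 + j.1).choose k) ^ 2 * ((i.1 + j.1 + k).choose k) ^ 2 : ℕ) : ℤ)) := by
  classical
  set f := (Matrix.detRowAlternating : (Fin (n + 1) → ℤ) [⋀^Fin (n + 1)]→ₗ[ℤ] ℤ) with hfdef
  let u : Fin (n + 1) → ℤ := fun j => if (j : ℕ) % 2 = 0 then 1 else 5
  let δ : Fin (n + 1) → ℤ := fun j => if (j : ℕ) % 2 = 0 then 0 else 1
  let P : Fin (n + 1) → Fin (n + 1) → ℤ :=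
    fun i j => if ((i : ℕ) + (j : ℕ)) % 2 = 0 then 1 else 5
  let E : Fin (n + 1) → Fin (n + 1) → ℤ :=
    fun i j => ((ap ((i : ℕ) + (j : ℕ)) : ℤ) - P i j) / 24
  have hdvdPE : ∀ i j : Fin (n + 1), (24 : ℤ) ∣ ((ap ((i : ℕ) + (j : ℕ)) : ℤ) - P i j) := by
    intro i j
    exact ap_int _
  have hentry : ∀ i j : Fin (n + 1), (24 : ℤ) * E i j + P i j = (ap ((i : ℕ) + (j : ℕ)) : ℤ) := by
    intro i j
    have h := Int.mul_ediv_cancel' (hdvdPE i j)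
    simp only [E]
    omega
  -- the matrix equals rows (24 • E) + P
  have hM : (Matrix.of fun i j : Fin (n + 1) =>
        ((∑ k ∈ Finset.range (i.1 + j.1 + 1),
            ((i.1 + j.1).choose k) ^ 2 * ((i.1 + j.1 + k).choose k) ^ 2 : ℕ) : ℤ))
      = ((fun i => (24 : ℤ) • E i) + P) := by
    funext i j
    show ((ap ((i : ℕ) + (j : ℕ)) : ℕ) : ℤ) = ((24 : ℤ) • E i + P i) j
    rw [Pi.add_apply, Pi.smul_apply, smul_eq_mul, hentry i j]
  rw [hM]
  show (24 : ℤ) ^ n ∣ f ((fun i => (24 : ℤ) • E i) + P)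
  rw [show f ((fun i => (24 : ℤ) • E i) + P)
      = f.toMultilinearMap ((fun i => (24 : ℤ) • E i) + P) from rfl]
  rw [MultilinearMap.map_add_univ]
  apply Finset.dvd_sum
  intro s _
  -- pull out the smul factors
  have hpiece : s.piecewise (fun i => (24 : ℤ) • E i) P
      = s.piecewise (fun i => (24 : ℤ) • (s.piecewise E P) i) (s.piecewise E P) := by
    funext i
    by_cases hi : i ∈ s
    · rw [Finset.piecewise_eq_of_mem _ _ _ hi, Finset.piecewise_eq_of_mem _ _ _ hi,
        Finset.piecewise_eq_of_mem _ _ _ hi]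
    · rw [Finset.piecewise_eq_of_notMem _ _ _ hi, Finset.piecewise_eq_of_notMem _ _ _ hi,
        Finset.piecewise_eq_of_notMem _ _ _ hi]
  rw [hpiece, MultilinearMap.map_piecewise_smul, Finset.prod_const, smul_eq_mul]
  by_cases hcard : n ≤ s.card
  · exact Dvd.dvd.mul_right (pow_dvd_pow (24 : ℤ) hcard) _
  -- now s.card ≤ n - 1, so the complement has at least two elements
  · set g := s.piecewise E P with hgdef
    have hgP : ∀ i : Fin (n + 1), i ∉ s → g i = P i := fun i hi =>
      Finset.piecewise_eq_of_notMem _ _ _ hi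
    by_cases hpair : ∃ i : Fin (n + 1), i ∉ s ∧ ∃ j : Fin (n + 1), j ∉ s ∧ i ≠ j ∧
        (i : ℕ) % 2 = (j : ℕ) % 2
    · obtain ⟨i, hi, j, hj, hij, hpar⟩ := hpair
      have hrows : g i = g j := by
        rw [hgP i hi, hgP j hj]
        funext k
        simp only [P]
        have : ((i : ℕ) + (k : ℕ)) % 2 = ((j : ℕ) + (k : ℕ)) % 2 := by omega
        rw [this]
      rw [show f.toMultilinearMap g = f g from rfl,
        AlternatingMap.map_eq_zero_of_eq f g hrows hij, mul_zero]
      exact dvd_zero _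
    · -- all elements of the complement have distinct parities; complement has ≤ 2 elements
      push_neg at hpair
      have hinj : Set.InjOn (fun i : Fin (n + 1) => (i : ℕ) % 2) (sᶜ : Finset (Fin (n + 1))) := by
        intro a ha b hb hab
        by_contra hne
        exact (hpair a (Finset.mem_compl.mp ha) b (Finset.mem_compl.mp hb) hne) hab
      have hcle : (sᶜ : Finset (Fin (n + 1))).card ≤ 2 := by
        have h2 : (sᶜ : Finset (Fin (n + 1))).card ≤ ({0, 1} : Finset ℕ).card := by
          apply Finset.card_le_card_of_injOn (fun i : Fin (n + 1) => (i : ℕ) % 2)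
          · intro a _
            simp only [Finset.coe_insert, Finset.coe_singleton, Set.mem_insert_iff,
              Set.mem_singleton_iff, Finset.mem_insert, Finset.mem_singleton]
            omega
          · exact hinj
        simpa using h2
      have hccard : s.card + (sᶜ : Finset (Fin (n + 1))).card = n + 1 := by
        rw [Finset.card_add_card_compl]
        simp
      have hc2 : (sᶜ : Finset (Fin (n + 1))).card = 2 := by omega
      have hscard : s.card = n - 1 := by omega
      obtain ⟨a, b, hab, hset⟩ := Finset.card_eq_two.mp hc2
      have hamem : a ∉ s := by
        have : a ∈ sᶜ := by rw [hset]; simp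
        exact Finset.mem_compl.mp this
      have hbmem : b ∉ s := by
        have : b ∈ sᶜ := by rw [hset]; simp
        exact Finset.mem_compl.mp this
      have hparne : (a : ℕ) % 2 ≠ (b : ℕ) % 2 := fun h => hpair a hamem b hbmem hab h
      -- main divisibility claim
      have main : ∀ x y : Fin (n + 1), x ∉ s → y ∉ s → (x : ℕ) % 2 = 0 → (y : ℕ) % 2 = 1 →
          (24 : ℤ) ∣ f g := by
        intro x y hx hy hx0 hy1
        have hxy : x ≠ y := by
          intro h; rw [h] at hx0; omega
        have hgx : g x = u := by
          rw [hgP x hx]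
          funext k
          simp only [P, u]
          have : ((x : ℕ) + (k : ℕ)) % 2 = (k : ℕ) % 2 := by omega
          rw [this]
        have hgy : g y = (5 : ℤ) • u - (24 : ℤ) • δ := by
          rw [hgP y hy]
          funext k
          simp only [P, u, δ, Pi.sub_apply, Pi.smul_apply, smul_eq_mul]
          rcases Nat.mod_two_eq_zero_or_one (k : ℕ) with hk | hk
          · have : ((y : ℕ) + (k : ℕ)) % 2 = 1 := by omega
            rw [this, hk]
            norm_num
          · have : ((y : ℕ) + (k : ℕ)) % 2 = 0 := by omega
            rw [this, hk]
            norm_num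
        have step : f g = (5 : ℤ) • f (Function.update g y u)
            - (24 : ℤ) • f (Function.update g y δ) := by
          calc f g = f (Function.update g y (g y)) := by rw [Function.update_eq_self]
            _ = f (Function.update g y ((5 : ℤ) • u - (24 : ℤ) • δ)) := by rw [hgy]
            _ = f (Function.update g y ((5 : ℤ) • u)) - f (Function.update g y ((24 : ℤ) • δ)) :=
                f.map_update_sub g y _ _
            _ = (5 : ℤ) • f (Function.update g y u) - (24 : ℤ) • f (Function.update g y δ) := by
                rw [f.map_update_smul, f.map_update_smul]
        have hzero : f (Function.update g y u) = 0 := by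
          apply AlternatingMap.map_eq_zero_of_eq f _ (i := x) (j := y) _ hxy
          rw [Function.update_of_ne hxy, Function.update_self, hgx]
        rw [hzero] at step
        rw [step]
        refine ⟨-(f (Function.update g y δ)), ?_⟩
        rw [smul_zero, zero_sub, smul_eq_mul]
        ring
      have hdvd24 : (24 : ℤ) ∣ f g := by
        rcases Nat.mod_two_eq_zero_or_one (a : ℕ) with ha | ha
        · exact main a b hamem hbmem ha (by omega)
        · exact main b a hbmem hamem (by omega) ha
      obtain ⟨c, hc⟩ := hdvd24
      rw [show f.toMultilinearMap g = f g from rfl, hc]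
      have : (24 : ℤ) ^ s.card * (24 * c) = 24 ^ (s.card + 1) * c := by ring
      rw [this]
      have hn : n ≤ s.card + 1 := by omega
      exact Dvd.dvd.mul_right (pow_dvd_pow (24 : ℤ) hn) _
end
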